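/- arXiv:2202.11627 — 2 statements merged into one kernel-verified Lean document; each statement's English description precedes it below -/
import Mathlib

section
/- Let j_n denote the number of DC-equivalence classes of paths of length n in ℰ. Then j_0 = 1, j_1 = 0, j_2 = j_3 = j_4 = 1, j_5 = 2, j_6 = 2, and j_n = 2j_{n−1} − j_{n−2} + j_{n−5} − j_{n−6} + j_{n−7} for all n ≥ 7. -/
/-- Steps of a Dyck path with catastrophes: up-step `U`, down-step `D`,
and catastrophe step `C k` of size `k` (valid paths only use `k ≥ 2`). -/
inductive Step where
  | U : Step
  | D : Step
  | C : ℕ → Step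
  deriving DecidableEq

/-- The vertical displacement of a step. -/
def Step.val : Step → ℤ
  | .U => 1
  | .D => -1
  | .C k => -(k : ℤ)

/-- The height (ordinate) of the path after its first `i` steps. -/
def hgt (P : List Step) (i : ℕ) : ℤ := ((P.take i).map Step.val).sum

/-- `InE P` means `P` is a Dyck path with catastrophes (a member of ℰ):
it stays at height ≥ 0, ends on the x-axis, and every catastrophe step
`C k` has `k ≥ 2` and starts at height `k` (hence ends on the x-axis). -/
def InE (P : List Step) : Prop :=
  (∀ i, 0 ≤ hgt P i) ∧ hgt P P.length = 0 ∧
    ∀ i k, P[i]? = some (Step.C k) → 2 ≤ k ∧ hgt P i = (k : ℤ)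

/-- `(UD)^k`. -/
def UDpow (k : ℕ) : List Step := (List.replicate k [Step.U, Step.D]).flatten

/-- `(DU)^k`. -/
def DUpow (k : ℕ) : List Step := (List.replicate k [Step.D, Step.U]).flatten

/-- `U^k`. -/
def Upow (k : ℕ) : List Step := List.replicate k Step.U

/-- `C_s` with the convention `C_1 = D`. -/
def cfin (s : ℕ) : Step := if s = 1 then Step.D else Step.C s

/-- Test whether a step is a catastrophe step. -/
def isCatB : Step → Bool
  | .C _ => true
  | _ => false

/-- The number of catastrophe steps in a path. -/
def catCount (P : List Step) : ℕ := P.countP isCatB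

/-- The number of equivalence classes, for the equivalence `E`, of paths of
length `n` in ℰ. -/
noncomputable def nClasses (E : List Step → List Step → Prop) (n : ℕ) : ℕ :=
  Nat.card (Quot (fun P Q : {P : List Step // InE P ∧ P.length = n} => E P.1 Q.1))

/-- Two paths are `DC`-equivalent when, for every `k ≥ 2`, the occurrences of
the pattern `D C_k` appear at the same positions in both paths. -/
def DCEquiv (P Q : List Step) : Prop :=
  ∀ k, 2 ≤ k → ∀ i : ℕ,
    (P[i]? = some Step.D ∧ P[i + 1]? = some (Step.C k)) ↔
    (Q[i]? = some Step.D ∧ Q[i + 1]? = some (Step.C k))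

lemma hgt_zero (P : List Step) : hgt P 0 = 0 := rfl

lemma hgt_succ (P : List Step) (i : ℕ) (h : i < P.length) :
    hgt P (i+1) = hgt P i + (P[i]).val := by
  have ht : P.take (i+1) = P.take i ++ [P[i]] := by
    rw [List.take_succ, List.getElem?_eq_getElem h]; rfl
  unfold hgt
  rw [ht, List.map_append, List.sum_append]; simp

lemma hgt_of_length_le (P : List Step) (i : ℕ) (h : P.length ≤ i) :
    hgt P i = hgt P P.length := by
  unfold hgt
  rw [List.take_of_length_le h, List.take_length]

lemma hgt_append_left (X Y : List Step) (i : ℕ) (h : i ≤ X.length) :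
    hgt (X ++ Y) i = hgt X i := by
  unfold hgt
  rw [List.take_append_of_le_length h]

lemma hgt_append_right (X Y : List Step) (j : ℕ) :
    hgt (X ++ Y) (X.length + j) = hgt X X.length + hgt Y j := by
  unfold hgt
  rw [List.take_append]
  simp [List.take_length, List.take_of_length_le]

lemma hgt_drop (P : List Step) (m j : ℕ) (h : m ≤ P.length) :
    hgt (P.drop m) j = hgt P (m + j) - hgt P m := by
  have hl : (P.take m).length = m := List.length_take_of_le h
  have h1 : hgt P (m + j) = hgt P m + hgt (P.drop m) j := by
    conv_lhs => rw [← List.take_append_drop m P]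
    rw [show m + j = (P.take m).length + j from by rw [hl], hgt_append_right]
    congr 1
    simp [hgt, List.take_take, hl]
  linarith

lemma val_le_one (s : Step) : s.val ≤ 1 := by
  cases s <;> simp [Step.val] <;> omega

lemma hgt_le (P : List Step) (i : ℕ) : hgt P i ≤ i := by
  induction i with
  | zero => simp [hgt_zero]
  | succ n ih =>
    by_cases h : n < P.length
    · rw [hgt_succ P n h]
      have := val_le_one (P[n])
      push_cast; omega
    · push_neg at h
      rw [hgt_of_length_le P (n+1) (by omega), ← hgt_of_length_le P n h]
      push_cast; omega


lemma UDpow_zero : UDpow 0 = [] := rfl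

lemma UDpow_succ (m : ℕ) : UDpow (m+1) = Step.U :: Step.D :: UDpow m := by
  simp [UDpow, List.replicate_succ]

lemma UDpow_length (m : ℕ) : (UDpow m).length = 2 * m := by
  induction m with
  | zero => rfl
  | succ m ih => rw [UDpow_succ]; simp [ih]; omega

lemma Upow_length (h : ℕ) : (Upow h).length = h := by simp [Upow]

lemma hgt_UDpow (m i : ℕ) :
    hgt (UDpow m) i = if i < 2*m ∧ i % 2 = 1 then 1 else 0 := by
  induction m generalizing i with
  | zero => simp [UDpow_zero, hgt]
  | succ m ih =>
    rw [UDpow_succ]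
    match i with
    | 0 => simp [hgt]
    | 1 =>
      rw [if_pos (by omega),
        show (Step.U :: Step.D :: UDpow m) = [Step.U, Step.D] ++ UDpow m from rfl,
        hgt_append_left _ _ _ (by simp)]
      norm_num [hgt, Step.val]
    | (j+2) =>
      have happ := hgt_append_right [Step.U, Step.D] (UDpow m) j
      simp only [List.length_cons, List.length_nil, zero_add] at happ
      rw [show (Step.U :: Step.D :: UDpow m) = [Step.U, Step.D] ++ UDpow m from rfl,
        show j + 2 = 0 + 1 + 1 + j from by omega, happ, ih j,
        show hgt [Step.U, Step.D] (0+1+1) = 0 from by norm_num [hgt, Step.val], zero_add]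
      exact if_congr (by omega) rfl rfl

lemma hgt_Upow (h i : ℕ) : hgt (Upow h) i = min i h := by
  simp [Upow, hgt, List.take_replicate, Step.val, List.map_replicate]

lemma steps_UDpow {m : ℕ} {s : Step} (hs : s ∈ UDpow m) : s = Step.U ∨ s = Step.D := by
  unfold UDpow at hs
  rw [List.mem_flatten] at hs
  obtain ⟨l, hl, hsl⟩ := hs
  rw [List.eq_of_mem_replicate hl] at hsl
  rw [List.mem_cons, List.mem_singleton] at hsl
  exact hsl

lemma steps_Upow {h : ℕ} {s : Step} (hs : s ∈ Upow h) : s = Step.U := by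
  exact List.eq_of_mem_replicate hs

def enc (P : List Step) (i : ℕ) : Option ℕ :=
  match P[i]?, P[i+1]? with
  | some .D, some (.C k) => if 2 ≤ k then some k else none
  | _, _ => none

lemma enc_eq_some_iff {P : List Step} {i k : ℕ} :
    enc P i = some k ↔ P[i]? = some Step.D ∧ P[i+1]? = some (Step.C k) ∧ 2 ≤ k := by
  rcases hi : P[i]? with _ | s
  · simp [enc, hi]
  rcases hj : P[i+1]? with _ | t
  · cases s <;> simp [enc, hi, hj]
  cases s <;> cases t <;> simp [enc, hi, hj] <;> omega

lemma enc_eq_none {P : List Step} {i : ℕ}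
    (h : ∀ k, ¬(P[i]? = some Step.D ∧ P[i+1]? = some (Step.C k) ∧ 2 ≤ k)) :
    enc P i = none := by
  cases he : enc P i with
  | none => rfl
  | some k => exact absurd (enc_eq_some_iff.mp he) (h k)

def graft (L k : ℕ) (g : ℕ → Option ℕ) : ℕ → Option ℕ :=
  fun i => if i < L + 2 then (if i = L then some k else none) else g (i - (L+2))

def segE (m h : ℕ) : List Step := UDpow m ++ Upow h

def segO (m h : ℕ) : List Step := Step.U :: Step.U :: Step.C 2 :: segE m h

structure SegFacts (X : List Step) (L h : ℕ) : Prop where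
  len : X.length = L
  nonneg : ∀ i, 0 ≤ hgt X i
  final : hgt X L = h
  cat : ∀ i k, X[i]? = some (Step.C k) → 2 ≤ k ∧ hgt X i = (k:ℤ)
  noDC : ∀ i k, X[i+1]? = some (Step.C k) → X[i]? ≠ some Step.D
  lastU : 1 ≤ h → X[L-1]? = some Step.U

lemma segE_length (m h : ℕ) : (segE m h).length = 2*m + h := by
  simp [segE, UDpow_length, Upow_length]

lemma hgt_segE (m h i : ℕ) :
    hgt (segE m h) i =
      if i ≤ 2*m then (if i < 2*m ∧ i % 2 = 1 then 1 else 0) else min (i - 2*m : ℕ) h := by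
  rcases le_or_gt i (2*m) with hle | hlt
  · rw [segE, hgt_append_left _ _ _ (by rw [UDpow_length]; exact hle), hgt_UDpow]
    rw [if_pos hle]
    split <;> simp
  · obtain ⟨j, rfl⟩ : ∃ j, i = 2*m + j := ⟨i - 2*m, by omega⟩
    have := hgt_append_right (UDpow m) (Upow h) j
    rw [UDpow_length] at this
    rw [segE, this, hgt_UDpow, hgt_Upow, if_neg (by omega), if_neg (by omega)]
    have h2 : 2*m + j - 2*m = j := by omega
    rw [h2, zero_add]

lemma segFacts_E (m h : ℕ) : SegFacts (segE m h) (2*m + h) h := by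
  constructor
  · exact segE_length m h
  · intro i; rw [hgt_segE]; split
    · split <;> norm_num
    · positivity
  · rw [hgt_segE]
    rcases Nat.eq_zero_or_pos h with rfl | hp
    · norm_num
    · rw [if_neg (by omega)]
      norm_num
  · intro i k hik
    have := List.mem_of_getElem? hik
    rw [segE, List.mem_append] at this
    rcases this with h' | h'
    · have := steps_UDpow h'
      simp at this
    · exact absurd (steps_Upow h') (by simp)
  · intro i k hik
    have := List.mem_of_getElem? hik
    rw [segE, List.mem_append] at this
    rcases this with h' | h'
    · have := steps_UDpow h'
      simp at this
    · exact absurd (steps_Upow h') (by simp)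
  · intro hp
    rw [segE, List.getElem?_append_right (by rw [UDpow_length]; omega), UDpow_length]
    rw [Upow, List.getElem?_replicate, if_pos (by omega)]

lemma segO_cons (m h : ℕ) : segO m h = [Step.U, Step.U, Step.C 2] ++ segE m h := rfl

lemma segO_length (m h : ℕ) : (segO m h).length = 2*m + h + 3 := by
  simp [segO, segE_length]

lemma hgt_UUC (i : ℕ) :
    hgt [Step.U, Step.U, Step.C 2] i = if i = 1 then 1 else if i = 2 then 2 else 0 := by
  match i with
  | 0 => rfl
  | 1 => norm_num [hgt, Step.val]
  | 2 => norm_num [hgt, Step.val]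
  | (j+3) =>
    rw [if_neg (by omega), if_neg (by omega), hgt_of_length_le _ _ (by simp)]
    norm_num [hgt, Step.val]

lemma hgt_segO (m h i : ℕ) :
    hgt (segO m h) i = if i < 3 then (if i ≤ 2*m + 3 then (i : ℤ) else 0)
      else hgt (segE m h) (i - 3) := by
  rcases lt_or_ge i 3 with hlt | hle
  · have hle2 : i ≤ 2*m + 3 := by omega
    rw [segO_cons, hgt_append_left _ _ _ (by simp; omega), hgt_UUC, if_pos hlt,
     if_pos hle2]
    have : i = 0 ∨ i = 1 ∨ i = 2 := by omega
    rcases this with rfl | rfl | rfl <;> norm_num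
  · obtain ⟨j, rfl⟩ : ∃ j, i = 3 + j := ⟨i - 3, by omega⟩
    have := hgt_append_right [Step.U, Step.U, Step.C 2] (segE m h) j
    norm_num [hgt_UUC] at this
    have this2 : hgt (segO m h) (3+j) = hgt (segE m h) j := this
    rw [segO_cons] at this2 ⊢
    rw [this2, if_neg (by omega)]
    congr 1
    omega

lemma segFacts_O (m h : ℕ) : SegFacts (segO m h) (2*m + h + 3) h := by
  have hE := segFacts_E m h
  constructor
  · exact segO_length m h
  · intro i; rw [hgt_segO]; split
    · split <;> [positivity; norm_num]
    · exact hE.nonneg _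
  · rw [hgt_segO, if_neg (by omega), show 2*m+h+3-3 = 2*m+h from by omega, hE.final]
  · intro i k hik
    match i with
    | 0 => simp [segO] at hik
    | 1 => simp [segO] at hik
    | 2 =>
      simp [segO] at hik
      have hk : k = 2 := by omega
      subst hk
      refine ⟨le_refl 2, ?_⟩
      rw [hgt_segO]
      norm_num
    | (j+3) =>
      have hj : (segO m h)[j+3]? = (segE m h)[j]? := by
        simp [segO]
      rw [hj] at hik
      refine ⟨(hE.cat j k hik).1, ?_⟩
      rw [hgt_segO, if_neg (by omega), show j+3-3 = j from by omega]
      exact (hE.cat j k hik).2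
  · intro i k hik
    match i with
    | 0 => simp [segO]
    | 1 => simp [segO]
    | 2 =>
      have : (segO m h)[2+1]? = (segE m h)[0]? := by simp [segO]
      rw [this] at hik
      exact absurd hik (by
        intro h'
        have := List.mem_of_getElem? h'
        rw [segE, List.mem_append] at this
        rcases this with h'' | h''
        · rcases steps_UDpow h'' with h3 | h3 <;> cases h3
        · cases steps_Upow h'')
    | (j+3) =>
      have h1 : (segO m h)[j+3+1]? = (segE m h)[j+1]? := by simp [segO]
      have h2 : (segO m h)[j+3]? = (segE m h)[j]? := by simp [segO]
      rw [h1] at hik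
      rw [h2]
      exact hE.noDC j k hik
  · intro hp
    have h1 := hE.lastU hp
    rw [segO_cons, List.getElem?_append_right (by simp; omega)]
    convert h1 using 2
    simp only [List.length_cons, List.length_nil]; omega

lemma enc_congr {P Q : List Step} {i j : ℕ} (h1 : P[i]? = Q[j]?)
    (h2 : P[i+1]? = Q[j+1]?) : enc P i = enc Q j := by
  unfold enc; rw [h1, h2]

def Cl (n : ℕ) : Set (ℕ → Option ℕ) :=
  {f | ∃ P : List Step, InE P ∧ P.length = n ∧ enc P = f}

lemma block_facts {X : List Step} {L h k : ℕ} (F : SegFacts X L h) (hk : h = k + 1)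
    (h2 : 2 ≤ k) {Q : List Step} (hQ : InE Q) :
    InE (X ++ Step.D :: Step.C k :: Q) ∧
    (X ++ Step.D :: Step.C k :: Q).length = L + 2 + Q.length ∧
    enc (X ++ Step.D :: Step.C k :: Q) = graft L k (enc Q) := by
  set R : List Step := Step.D :: Step.C k :: Q with hR
  set P : List Step := X ++ R with hP
  have hL3 : 3 ≤ L := by
    have h1 := hgt_le X L
    rw [F.final] at h1
    have : (3 : ℤ) ≤ (h : ℤ) := by push_cast; omega
    omega
  have g1 : ∀ i, i < L → P[i]? = X[i]? := by
    intro i hi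
    rw [hP, List.getElem?_append, if_pos (by rw [F.len]; exact hi)]
  have g2 : P[L]? = some Step.D := by
    rw [hP, List.getElem?_append_right (by rw [F.len])]
    rw [F.len, Nat.sub_self]
    simp [hR]
  have g3 : P[L+1]? = some (Step.C k) := by
    rw [hP, List.getElem?_append_right (by rw [F.len]; omega)]
    rw [F.len, show L + 1 - L = 1 from by omega]
    simp [hR]
  have g4 : ∀ j, P[L+2+j]? = Q[j]? := by
    intro j
    rw [hP, List.getElem?_append_right (by rw [F.len]; omega)]
    rw [F.len, show L + 2 + j - L = j + 1 + 1 from by omega]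
    rw [hR]
    simp
  have H1 : ∀ i, i ≤ L → hgt P i = hgt X i := by
    intro i hi
    rw [hP, hgt_append_left _ _ _ (by rw [F.len]; exact hi)]
  have HXlen : hgt X X.length = (h : ℤ) := by rw [F.len, F.final]
  have HR : ∀ j, hgt P (L + j) = (h : ℤ) + hgt R j := by
    intro j
    rw [hP, show L + j = X.length + j from by rw [F.len], hgt_append_right, HXlen]
  have hR1 : hgt R 1 = -1 := by norm_num [hR, hgt, Step.val]
  have hR2 : ∀ j, hgt R (2 + j) = (-1 - (k:ℤ)) + hgt Q j := by
    intro j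
    have : R = [Step.D, Step.C k] ++ Q := rfl
    rw [this, show (2+j) = [Step.D, Step.C k].length + j from by simp, hgt_append_right]
    have : hgt [Step.D, Step.C k] [Step.D, Step.C k].length = -1 - (k:ℤ) := by
      norm_num [hgt, Step.val]; ring
    rw [this]
  have HQ : ∀ j, hgt P (L + 2 + j) = hgt Q j := by
    intro j
    rw [show L + 2 + j = L + (2 + j) from by omega, HR, hR2, hk]
    push_cast; ring
  have hlen : P.length = L + 2 + Q.length := by
    rw [hP, List.length_append, F.len, hR]; simp; omega
  refine ⟨⟨?_, ?_, ?_⟩, hlen, ?_⟩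
  · -- nonneg
    intro i
    rcases le_or_gt i L with hi | hi
    · rw [H1 i hi]; exact F.nonneg i
    · rcases eq_or_lt_of_le (Nat.succ_le_of_lt hi) with hi' | hi'
      · have hEq : i = L + 1 := by omega
        subst hEq
        rw [HR 1, hR1, hk]; push_cast; omega
      · obtain ⟨j, rfl⟩ : ∃ j, i = L + 2 + j := ⟨i - L - 2, by omega⟩
        rw [HQ j]; exact hQ.1 j
  · -- ends at 0
    rw [hlen, HQ, hQ.2.1]
  · -- catastrophes
    intro i m him
    rcases lt_trichotomy i L with hi | hi | hi
    · have := F.cat i m (by rw [← g1 i hi]; exact him)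
      exact ⟨this.1, by rw [H1 i (le_of_lt hi)]; exact this.2⟩
    · subst hi; rw [g2] at him; cases him
    · rcases eq_or_lt_of_le (Nat.succ_le_of_lt hi) with hi' | hi'
      · have : i = L + 1 := by omega
        subst this
        rw [g3] at him
        obtain rfl : k = m := by simpa using him
        refine ⟨h2, ?_⟩
        rw [HR 1, hR1, hk]; push_cast; ring
      · obtain ⟨j, rfl⟩ : ∃ j, i = L + 2 + j := ⟨i - L - 2, by omega⟩
        rw [g4 j] at him
        have := hQ.2.2 j m him
        exact ⟨this.1, by rw [HQ j]; exact this.2⟩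
  · -- enc
    funext i
    rcases lt_trichotomy i L with hi | hi | hi
    · rw [show graft L k (enc Q) i = none from by
        unfold graft; rw [if_pos (by omega), if_neg (by omega)]]
      apply enc_eq_none
      rintro m ⟨hd, hc, _⟩
      rcases eq_or_lt_of_le (Nat.succ_le_of_lt hi) with hi' | hi'
      · have hEq : i + 1 = L := by omega
        rw [hEq, g2] at hc; cases hc
      · rw [g1 (i+1) hi'] at hc
        rw [g1 i hi] at hd
        exact F.noDC i m hc hd
    · rw [hi]
      rw [show graft L k (enc Q) L = some k from by
        unfold graft; rw [if_pos (by omega), if_pos rfl]]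
      exact enc_eq_some_iff.mpr ⟨g2, g3, h2⟩
    · rcases eq_or_lt_of_le (Nat.succ_le_of_lt hi) with hi' | hi'
      · have : i = L + 1 := by omega
        subst this
        rw [show graft L k (enc Q) (L+1) = none from by
          unfold graft; rw [if_pos (by omega), if_neg (by omega)]]
        apply enc_eq_none
        rintro m ⟨hd, _, _⟩
        rw [g3] at hd; cases hd
      · obtain ⟨j, rfl⟩ : ∃ j, i = L + 2 + j := ⟨i - L - 2, by omega⟩
        rw [show graft L k (enc Q) (L+2+j) = enc Q j from by
          unfold graft; rw [if_neg (by omega), show L+2+j-(L+2) = j from by omega]]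
        exact enc_congr (g4 j) (by rw [show L+2+j+1 = L+2+(j+1) from rfl]; exact g4 (j+1))

lemma tail_facts {X : List Step} {L : ℕ} (F : SegFacts X L 0) :
    InE X ∧ enc X = fun _ => none := by
  refine ⟨⟨F.nonneg, ?_, F.cat⟩, ?_⟩
  · rw [F.len, F.final]; simp
  · funext i
    apply enc_eq_none
    rintro m ⟨hd, hc, _⟩
    exact F.noDC i m hc hd

lemma InE_nil : InE ([] : List Step) := by
  refine ⟨fun i => ?_, by simp [hgt], fun i k h => by simp at h⟩
  simp [hgt]

lemma bot_mem_Cl {n : ℕ} (hn : n = 0 ∨ 2 ≤ n) : (fun _ => none) ∈ Cl n := by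
  rcases hn with rfl | hn
  · refine ⟨[], InE_nil, rfl, ?_⟩
    funext i
    apply enc_eq_none
    rintro m ⟨hd, -, -⟩
    simp at hd
  · have : ∃ m, n = 2*m ∨ n = 2*m + 3 := by
      rcases Nat.even_or_odd n with ⟨m, hm⟩ | ⟨m, hm⟩
      · exact ⟨m, Or.inl (by omega)⟩
      · exact ⟨m - 1, Or.inr (by omega)⟩
    obtain ⟨m, hm | hm⟩ := this
    · have F := segFacts_E m 0
      rw [Nat.add_zero] at F
      have := tail_facts F
      exact ⟨segE m 0, this.1, by rw [F.len]; omega, this.2⟩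
    · have F := segFacts_O m 0
      rw [Nat.add_zero] at F
      have := tail_facts F
      exact ⟨segO m 0, this.1, by rw [F.len]; omega, this.2⟩

lemma graft_mem_Cl {n L k : ℕ} (h2 : 2 ≤ k) (hL : k + 1 ≤ L) (hne : L ≠ k + 2)
    (hLn : L + 2 ≤ n) {g : ℕ → Option ℕ} (hg : g ∈ Cl (n - (L+2))) :
    graft L k g ∈ Cl n := by
  obtain ⟨Q, hQ, hQlen, hQenc⟩ := hg
  have hpar : ∃ m, L = 2*m + (k+1) ∨ L = 2*m + (k+1) + 3 := by
    rcases Nat.even_or_odd (L - (k+1)) with ⟨m, hm⟩ | ⟨m, hm⟩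
    · exact ⟨m, Or.inl (by omega)⟩
    · exact ⟨m - 1, Or.inr (by omega)⟩
  obtain ⟨m, hm | hm⟩ := hpar
  · have F := segFacts_E m (k+1)
    rw [← hm] at F
    obtain ⟨h1, h2', h3⟩ := block_facts F rfl h2 hQ
    exact ⟨_, h1, by rw [h2', hQlen]; omega, by rw [h3, hQenc]⟩
  · have F := segFacts_O m (k+1)
    rw [show 2*m + (k+1) + 3 = L from hm.symm] at F
    obtain ⟨h1, h2', h3⟩ := block_facts F rfl h2 hQ
    exact ⟨_, h1, by rw [h2', hQlen]; omega, by rw [h3, hQenc]⟩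

lemma InE_length_ne_one {P : List Step} (hP : InE P) : P.length ≠ 1 := by
  intro hlen
  obtain ⟨s, rfl⟩ := List.length_eq_one_iff.mp hlen
  have h1 : hgt [s] 1 = s.val := by simp [hgt]
  have h0 : hgt [s] 1 = 0 := by
    have := hP.2.1; rwa [hlen] at this
  cases s with
  | U => rw [h1] at h0; simp [Step.val] at h0
  | D => rw [h1] at h0; simp [Step.val] at h0
  | C k =>
    have := hP.2.2 0 k (by simp)
    rw [show hgt [Step.C k] 0 = 0 from rfl] at this
    omega

lemma hgt_le_add (P : List Step) (a j : ℕ) : hgt P (a + j) ≤ hgt P a + j := by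
  induction j with
  | zero => simp
  | succ j ih =>
    by_cases h : a + j < P.length
    · rw [show a + (j+1) = (a+j) + 1 from rfl, hgt_succ P (a+j) h]
      have := val_le_one (P[a+j])
      push_cast
      push_cast at ih
      omega
    · push_neg at h
      rw [show a + (j+1) = (a+j) + 1 from rfl, hgt_of_length_le P ((a+j)+1) (by omega),
        ← hgt_of_length_le P (a+j) h]
      push_cast
      push_cast at ih
      omega

lemma hgt_parity {P : List Step} {i : ℕ} (hi : i ≤ P.length)
    (hodd : ∀ j m, j < i → P[j]? = some (Step.C m) → m % 2 = 1) :
    (hgt P i - i) % 2 = 0 := by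
  induction i with
  | zero => simp [hgt]
  | succ i ih =>
    have hlt : i < P.length := by omega
    have ih' := ih (by omega) (fun j m hj => hodd j m (by omega))
    rw [hgt_succ P i hlt]
    have hv : (P[i]).val % 2 = 1 := by
      cases hs : P[i] with
      | U => simp [Step.val]
      | D => rw [Step.val]; decide
      | C m =>
        have := hodd i m (by omega) (by rw [List.getElem?_eq_getElem hlt, hs])
        rw [Step.val]
        omega
    push_cast
    omega

lemma getElem?_lt {P : List Step} {i : ℕ} {s : Step} (h : P[i]? = some s) :
    i < P.length := by
  by_contra hc
  push_neg at hc
  rw [List.getElem?_eq_none hc] at h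
  cases h

lemma first_occ {P : List Step} (hP : InE P) {L k : ℕ} (hLk : enc P L = some k) :
    2 ≤ k ∧ k + 1 ≤ L ∧ L ≠ k + 2 ∧ L + 2 ≤ P.length ∧
    InE (P.drop (L+2)) ∧ (∀ j, enc (P.drop (L+2)) j = enc P (L+2+j)) ∧
    enc P (L+1) = none := by
  obtain ⟨hD, hC, h2⟩ := enc_eq_some_iff.mp hLk
  have hlen1 : L + 1 < P.length := getElem?_lt hC
  have hgt1 : hgt P (L+1) = (k : ℤ) := (hP.2.2 (L+1) k hC).2
  have hDe : P[L] = Step.D := by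
    have h' := List.getElem?_eq_getElem (l := P) (i := L) (by omega)
    rw [h'] at hD
    injection hD
  have hCe : P[L+1] = Step.C k := by
    have h' := List.getElem?_eq_getElem (l := P) (i := L+1) hlen1
    rw [h'] at hC
    injection hC
  have hgt0 : hgt P L = (k : ℤ) + 1 := by
    have := hgt_succ P L (by omega)
    rw [hDe] at this
    simp only [Step.val] at this
    omega
  have hgt2 : hgt P (L+2) = 0 := by
    have := hgt_succ P (L+1) hlen1
    rw [hCe] at this
    simp only [Step.val] at this
    rw [show L + 1 + 1 = L + 2 from by omega] at this
    omega
  have hkL : k + 1 ≤ L := by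
    have := hgt_le P L
    omega
  have hne : L ≠ k + 2 := by
    intro hEq
    have hoddcat : ∀ j m, j < L → P[j]? = some (Step.C m) → m % 2 = 1 := by
      intro j m hj hjm
      by_contra hm
      have hcat := hP.2.2 j m hjm
      have hmj : (m : ℤ) ≤ j := by have := hgt_le P j; omega
      have hj1 : hgt P (j+1) = 0 := by
        have := hgt_succ P j (getElem?_lt hjm)
        have hje : P[j] = Step.C m := by
          have h' := List.getElem?_eq_getElem (l := P) (i := j) (getElem?_lt hjm)
          rw [h'] at hjm
          injection hjm
        rw [hje] at this
        simp only [Step.val] at this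
        omega
      have := hgt_le_add P (j+1) (L - (j+1))
      rw [show j + 1 + (L - (j+1)) = L from by omega, hj1] at this
      omega
    have := hgt_parity (i := L) (by omega) hoddcat
    rw [hgt0] at this
    omega
  have hdlen : (P.drop (L+2)).length = P.length - (L+2) := List.length_drop
  have hdh : ∀ j, hgt (P.drop (L+2)) j = hgt P (L+2+j) := by
    intro j
    rw [hgt_drop P (L+2) j (by omega), hgt2, sub_zero]
  have hdget : ∀ j, (P.drop (L+2))[j]? = P[L+2+j]? := by
    intro j
    rw [List.getElem?_drop]
  refine ⟨h2, hkL, hne, by omega, ⟨?_, ?_, ?_⟩, ?_, ?_⟩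
  · intro j; rw [hdh j]; exact hP.1 _
  · rw [hdlen, hdh, show L + 2 + (P.length - (L+2)) = P.length from by omega]
    exact hP.2.1
  · intro j m hjm
    rw [hdget j] at hjm
    exact ⟨(hP.2.2 _ m hjm).1, by rw [hdh j]; exact (hP.2.2 _ m hjm).2⟩
  · intro j
    exact enc_congr (hdget j) (by rw [show L+2+j+1 = L+2+(j+1) from rfl]; exact hdget (j+1))
  · apply enc_eq_none
    rintro m ⟨hd, -, -⟩
    rw [hC] at hd
    cases hd

lemma Cl_cases {n : ℕ} {f : ℕ → Option ℕ} (hf : f ∈ Cl n) :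
    (f = (fun _ => none) ∧ (n = 0 ∨ 2 ≤ n)) ∨
    (∃ L k g, 2 ≤ k ∧ k + 1 ≤ L ∧ L ≠ k + 2 ∧ L + 2 ≤ n ∧
      g ∈ Cl (n - (L+2)) ∧ f = graft L k g) := by
  obtain ⟨P, hP, hlen, henc⟩ := hf
  by_cases hb : ∀ i, f i = none
  · left
    refine ⟨funext hb, ?_⟩
    have := InE_length_ne_one hP
    omega
  · right
    push_neg at hb
    have hex : ∃ i, f i ≠ none := hb
    set L := Nat.find hex with hLdef
    have hLspec : f L ≠ none := Nat.find_spec hex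
    have hmin : ∀ j, j < L → f j = none := by
      intro j hj
      exact not_not.mp (Nat.find_min hex (hLdef ▸ hj))
    obtain ⟨k, hk⟩ : ∃ k, f L = some k := by
      cases hfL : f L
      · exact absurd hfL hLspec
      · exact ⟨_, rfl⟩
    rw [← henc] at hk
    obtain ⟨h2, hkL, hne, hL2, hdropInE, hdropenc, hL1none⟩ := first_occ hP hk
    refine ⟨L, k, enc (P.drop (L+2)), h2, hkL, hne, by omega,
      ⟨P.drop (L+2), hdropInE, by rw [List.length_drop, hlen], rfl⟩, ?_⟩
    funext i
    rcases lt_trichotomy i L with hi | rfl | hi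
    · rw [hmin i hi]
      unfold graft
      rw [if_pos (by omega), if_neg (by omega)]
    · rw [← henc]
      unfold graft
      rw [if_pos (by omega), if_pos rfl]
      exact hk
    · rcases eq_or_lt_of_le (Nat.succ_le_of_lt hi) with hi' | hi'
      · have hEq : i = L + 1 := by omega
        subst hEq
        rw [← henc, hL1none]
        unfold graft
        rw [if_pos (by omega), if_neg (by omega)]
      · obtain ⟨j, rfl⟩ : ∃ j, i = L + 2 + j := ⟨i - L - 2, by omega⟩
        rw [← henc, ← hdropenc j]
        unfold graft
        rw [if_neg (by omega), show L + 2 + j - (L+2) = j from by omega]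

lemma graft_eval_lt {L k : ℕ} {g : ℕ → Option ℕ} {i : ℕ} (hi : i < L) :
    graft L k g i = none := by
  unfold graft; rw [if_pos (by omega), if_neg (by omega)]

lemma graft_eval_L {L k : ℕ} {g : ℕ → Option ℕ} : graft L k g L = some k := by
  unfold graft; rw [if_pos (by omega), if_pos rfl]

lemma graft_eval_shift {L k : ℕ} {g : ℕ → Option ℕ} (j : ℕ) :
    graft L k g (L + 2 + j) = g j := by
  unfold graft; rw [if_neg (by omega), show L + 2 + j - (L+2) = j from by omega]

lemma graft_eq {L k L' k' : ℕ} {g g' : ℕ → Option ℕ}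
    (h : graft L k g = graft L' k' g') : L = L' ∧ k = k' ∧ g = g' := by
  have hL : L = L' := by
    by_contra hne
    rcases Nat.lt_or_ge L L' with hlt | hge
    · have h1 := congrFun h L
      rw [graft_eval_L, graft_eval_lt hlt] at h1
      cases h1
    · have hlt : L' < L := by omega
      have h1 := congrFun h L'
      rw [graft_eval_lt hlt, graft_eval_L] at h1
      cases h1
  subst hL
  have hk : k = k' := by
    have h1 := congrFun h L
    rw [graft_eval_L, graft_eval_L] at h1
    injection h1
  subst hk
  refine ⟨rfl, rfl, funext fun j => ?_⟩
  have h1 := congrFun h (L + 2 + j)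
  rwa [graft_eval_shift, graft_eval_shift] at h1

lemma graft_injective (L k : ℕ) : Function.Injective (graft L k) :=
  fun _ _ h => (graft_eq h).2.2

lemma ncard_finset_biUnion {α β : Type*} [DecidableEq α] (s : Finset α) (g : α → Set β)
    (hfin : ∀ a ∈ s, (g a).Finite)
    (hdisj : ∀ a ∈ s, ∀ b ∈ s, a ≠ b → Disjoint (g a) (g b)) :
    (⋃ a ∈ s, g a).ncard = ∑ a ∈ s, (g a).ncard := by
  induction s using Finset.cons_induction with
  | empty => simp
  | cons a s ha ih =>
    rw [Finset.sum_cons]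
    have hset : (⋃ x ∈ Finset.cons a s ha, g x) = g a ∪ ⋃ x ∈ (s : Finset α), g x := by
      rw [Finset.cons_eq_insert, Finset.set_biUnion_insert]
    rw [hset, Set.ncard_union_eq ?_ ?_ ?_,
      ih (fun b hb => hfin b (Finset.mem_cons_of_mem hb))
        (fun b hb c hc => hdisj b (Finset.mem_cons_of_mem hb) c (Finset.mem_cons_of_mem hc))]
    · rw [Set.disjoint_iUnion_right]
      intro b
      rw [Set.disjoint_iUnion_right]
      intro hb
      exact hdisj a (Finset.mem_cons_self a s) b (Finset.mem_cons_of_mem hb)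
        (fun hab => ha (hab ▸ hb))
    · exact hfin a (Finset.mem_cons_self a s)
    · apply Set.Finite.biUnion s.finite_toSet
      intro b hb
      exact hfin b (Finset.mem_cons_of_mem hb)

def KS (L : ℕ) : Finset ℕ := (Finset.Icc 2 (L-1)).filter (fun k => L ≠ k + 2)

lemma mem_KS {L k : ℕ} : k ∈ KS L ↔ 2 ≤ k ∧ k + 1 ≤ L ∧ L ≠ k + 2 := by
  simp [KS, Finset.mem_filter, Finset.mem_Icc]
  omega

def tau (n : ℕ) : ℕ := if n = 1 then 0 else 1

lemma Cl_eq (n : ℕ) :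
    Cl n = (if n = 1 then (∅ : Set (ℕ → Option ℕ)) else {fun _ => none}) ∪
      ⋃ L ∈ Finset.Icc 3 (n-2), ⋃ k ∈ KS L, (graft L k) '' Cl (n - (L+2)) := by
  ext f
  constructor
  · intro hf
    rcases Cl_cases hf with ⟨rfl, hn⟩ | ⟨L, k, g, h2, hkL, hne, hLn, hg, rfl⟩
    · left
      rw [if_neg (by omega)]
      rfl
    · right
      simp only [Set.mem_iUnion]
      exact ⟨L, Finset.mem_Icc.mpr ⟨by omega, by omega⟩, k, mem_KS.mpr ⟨h2, hkL, hne⟩,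
        g, hg, rfl⟩
  · intro hf
    rcases hf with hf | hf
    · by_cases hn : n = 1
      · rw [if_pos hn] at hf
        cases hf
      · rw [if_neg hn] at hf
        rw [hf]
        exact bot_mem_Cl (by omega)
    · simp only [Set.mem_iUnion] at hf
      obtain ⟨L, hL, k, hk, g, hg, rfl⟩ := hf
      rw [Finset.mem_Icc] at hL
      rw [mem_KS] at hk
      exact graft_mem_Cl hk.1 hk.2.1 hk.2.2 (by omega) hg

def jA : ℕ → ℕ → ℕ
  | 0, _ => 0
  | (fuel+1), n => tau n + ∑ L ∈ Finset.Icc 3 (n-2), (KS L).card * jA fuel (n - (L+2))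

def j (n : ℕ) : ℕ := jA (n+1) n

lemma jA_eq {f1 f2 n : ℕ} (h1 : n < f1) (h2 : n < f2) : jA f1 n = jA f2 n := by
  induction n using Nat.strong_induction_on generalizing f1 f2 with
  | _ n ih =>
    match f1, f2 with
    | f1+1, f2+1 =>
      simp only [jA]
      congr 1
      apply Finset.sum_congr rfl
      intro L hL
      rw [Finset.mem_Icc] at hL
      congr 1
      exact ih (n - (L+2)) (by omega) (by omega) (by omega)

lemma j_eq (n : ℕ) :
    j n = tau n + ∑ L ∈ Finset.Icc 3 (n-2), (KS L).card * j (n - (L+2)) := by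
  show jA (n+1) n = _
  simp only [jA]
  congr 1
  apply Finset.sum_congr rfl
  intro L hL
  rw [Finset.mem_Icc] at hL
  congr 1
  exact jA_eq (by omega) (by omega)

lemma Cl_card (n : ℕ) : (Cl n).Finite ∧ (Cl n).ncard = j n := by
  induction n using Nat.strong_induction_on with
  | _ n ih =>
    have hrec : ∀ L ∈ Finset.Icc 3 (n-2), (Cl (n - (L+2))).Finite ∧
        (Cl (n - (L+2))).ncard = j (n - (L+2)) := by
      intro L hL
      rw [Finset.mem_Icc] at hL
      exact ih _ (by omega)
    have hfirstfin : (if n = 1 then (∅ : Set (ℕ → Option ℕ)) else {fun _ => none}).Finite := by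
      split
      · exact Set.finite_empty
      · exact Set.finite_singleton _
    have hUfin : (⋃ L ∈ Finset.Icc 3 (n-2), ⋃ k ∈ KS L,
        (graft L k) '' Cl (n - (L+2))).Finite := by
      apply Set.Finite.biUnion (Finset.finite_toSet _)
      intro L hL
      apply Set.Finite.biUnion (Finset.finite_toSet _)
      intro k hk
      exact ((hrec L hL).1).image _
    have hdisj0 : Disjoint (if n = 1 then (∅ : Set (ℕ → Option ℕ)) else {fun _ => none})
        (⋃ L ∈ Finset.Icc 3 (n-2), ⋃ k ∈ KS L, (graft L k) '' Cl (n - (L+2))) := by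
      rw [Set.disjoint_left]
      intro f hf hf'
      simp only [Set.mem_iUnion] at hf'
      obtain ⟨L, hL, k, hk, g, hg, rfl⟩ := hf'
      split at hf
      · cases hf
      · rw [Set.mem_singleton_iff] at hf
        have := congrFun hf L
        rw [graft_eval_L] at this
        cases this
    constructor
    · rw [Cl_eq n]
      exact Set.Finite.union hfirstfin hUfin
    · rw [Cl_eq n, Set.ncard_union_eq hdisj0 hfirstfin hUfin, j_eq n]
      congr 1
      · split
        · rename_i hn1
          rw [Set.ncard_empty, tau, if_pos hn1]
        · rw [Set.ncard_singleton, tau]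
          split
          · omega
          · rfl
      · rw [ncard_finset_biUnion _ _ ?fin1 ?dis1]
        · apply Finset.sum_congr rfl
          intro L hL
          rw [ncard_finset_biUnion _ _ ?fin2 ?dis2]
          · rw [Finset.sum_congr rfl (fun k hk =>
              Set.ncard_image_of_injective _ (graft_injective L k))]
            rw [Finset.sum_const, smul_eq_mul, (hrec L hL).2]
          case fin2 =>
            intro k hk
            exact ((hrec L hL).1).image _
          case dis2 =>
            intro k hk k' hk' hne
            rw [Set.disjoint_left]
            rintro f ⟨g, hg, rfl⟩ ⟨g', hg', hEq⟩
            exact hne (graft_eq hEq.symm).2.1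
        case fin1 =>
          intro L hL
          apply Set.Finite.biUnion (Finset.finite_toSet _)
          intro k hk
          exact ((hrec L hL).1).image _
        case dis1 =>
          intro L hL L' hL' hne
          rw [Set.disjoint_left]
          intro f hf hf'
          simp only [Set.mem_iUnion] at hf hf'
          obtain ⟨k, hk, g, hg, rfl⟩ := hf
          obtain ⟨k', hk', g', hg', hEq⟩ := hf'
          exact hne (graft_eq hEq.symm).1

lemma KS_card {L : ℕ} (h3 : 3 ≤ L) : (KS L).card = if L = 3 then 1 else L - 3 := by
  rcases eq_or_lt_of_le h3 with h | h4
  · subst h; decide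
  · rw [if_neg (by omega)]
    have hKS : KS L = (Finset.Icc 2 (L-1)).erase (L-2) := by
      ext k
      rw [Finset.mem_erase, mem_KS, Finset.mem_Icc]
      omega
    rw [hKS, Finset.card_erase_of_mem (Finset.mem_Icc.mpr ⟨by omega, by omega⟩),
      Nat.card_Icc]
    omega

lemma j0 : j 0 = 1 := by decide
lemma j1 : j 1 = 0 := by decide
lemma j2 : j 2 = 1 := by decide
lemma j3 : j 3 = 1 := by decide
lemma j4 : j 4 = 1 := by decide
lemma j5 : j 5 = 2 := by decide
lemma j6 : j 6 = 2 := by decide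

def Usum (N : ℕ) : ℕ := ∑ i ∈ Finset.range (N+1), (KS (i+3)).card * j (N - i)

lemma jrec (N : ℕ) : j (N+5) = 1 + Usum N := by
  rw [j_eq (N+5), show tau (N+5) = 1 from rfl, show N+5-2 = N+3 from by omega, Usum]
  congr 1
  rw [show Finset.Icc 3 (N+3) = Finset.Ico 3 (N+4) from (Finset.Ico_add_one_right_eq_Icc 3 (N+3)).symm,
    Finset.sum_Ico_eq_sum_range]
  rw [show N+4-3 = N+1 from by omega]
  apply Finset.sum_congr rfl
  intro i hi
  rw [Finset.mem_range] at hi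
  rw [show 3 + i = i + 3 from by omega, show N+5-(i+3+2) = N - i from by omega]

lemma Usucc (N : ℕ) : Usum (N+1) = Usum N + j (N+1) + ∑ t ∈ Finset.range N, j t := by
  rw [Usum, Finset.sum_range_succ' (fun i => (KS (i+3)).card * j (N+1-i)) (N+1)]
  have h1 : ∀ i ∈ Finset.range (N+1),
      (KS (i+1+3)).card * j (N+1-(i+1)) =
      (KS (i+3)).card * j (N - i) + (if i = 0 then 0 else 1) * j (N - i) := by
    intro i hi
    rw [Finset.mem_range] at hi
    have hc : (KS (i+4)).card = (KS (i+3)).card + (if i = 0 then 0 else 1) := by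
      rcases Nat.eq_zero_or_pos i with rfl | hp
      · decide
      · rw [KS_card (by omega), KS_card (by omega), if_neg (by omega), if_neg (by omega),
          if_neg (by omega)]
        omega
    rw [show i+1+3 = i+4 from by omega, hc, show N+1-(i+1) = N - i from by omega]
    ring
  rw [Finset.sum_congr rfl h1, Finset.sum_add_distrib]
  have h2 : ∑ i ∈ Finset.range (N+1), (if i = 0 then 0 else 1) * j (N - i)
      = ∑ t ∈ Finset.range N, j t := by
    rw [Finset.sum_range_succ' (fun i => (if i = 0 then 0 else 1) * j (N - i)) N]
    have h3 : ∀ i ∈ Finset.range N,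
        (if i + 1 = 0 then 0 else 1) * j (N - (i+1)) = j (N - 1 - i) := by
      intro i hi
      rw [if_neg (by omega), one_mul, show N - (i+1) = N - 1 - i from by omega]
    rw [Finset.sum_congr rfl h3, Finset.sum_range_reflect]
    norm_num
  rw [h2, show (KS (0+3)).card = 1 from by decide, Usum]
  ring_nf
  rw [show 1 + N - 0 = 1 + N from rfl]

lemma jrec7 (N : ℕ) : (j (N+7) : ℤ) =
    2 * j (N+6) - j (N+5) + j (N+2) - j (N+1) + j N := by
  have e1 : j (N+7) = 1 + Usum (N+2) := by
    have := jrec (N+2); rwa [show N+2+5 = N+7 from by omega] at this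
  have e2 : j (N+6) = 1 + Usum (N+1) := by
    have := jrec (N+1); rwa [show N+1+5 = N+6 from by omega] at this
  have e3 : j (N+5) = 1 + Usum N := jrec N
  have e4 := Usucc (N+1)
  have e5 := Usucc N
  have e6 : ∑ t ∈ Finset.range (N+1), j t = (∑ t ∈ Finset.range N, j t) + j N :=
    Finset.sum_range_succ _ _
  rw [show N+1+1 = N+2 from by omega] at e4
  omega


lemma dcequiv_iff_enc_eq (P Q : List Step) : DCEquiv P Q ↔ enc P = enc Q := by
  constructor
  · intro h
    funext i
    rcases hp : enc P i with _ | k <;> rcases hq : enc Q i with _ | k'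
    · rfl
    · rw [enc_eq_some_iff] at hq
      have := (h k' hq.2.2 i).mpr ⟨hq.1, hq.2.1⟩
      rw [show (none : Option ℕ) = enc P i from hp.symm, enc_eq_some_iff.mpr ⟨this.1, this.2, hq.2.2⟩]
    · rw [enc_eq_some_iff] at hp
      have := (h k hp.2.2 i).mp ⟨hp.1, hp.2.1⟩
      rw [show (none : Option ℕ) = enc Q i from hq.symm, enc_eq_some_iff.mpr ⟨this.1, this.2, hp.2.2⟩]
    · rw [enc_eq_some_iff] at hp hq
      have := (h k hp.2.2 i).mp ⟨hp.1, hp.2.1⟩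
      rw [this.2] at hq
      simp only [Option.some.injEq, Step.C.injEq] at hq ⊢
      exact hq.2.1
  · intro h k hk i
    constructor
    · intro hocc
      have : enc P i = some k := enc_eq_some_iff.mpr ⟨hocc.1, hocc.2, hk⟩
      rw [h] at this
      have := enc_eq_some_iff.mp this
      exact ⟨this.1, this.2.1⟩
    · intro hocc
      have : enc Q i = some k := enc_eq_some_iff.mpr ⟨hocc.1, hocc.2, hk⟩
      rw [← h] at this
      have := enc_eq_some_iff.mp this
      exact ⟨this.1, this.2.1⟩

lemma nClasses_eq_ncard (n : ℕ) : nClasses DCEquiv n = (Cl n).ncard := by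
  rw [← Nat.card_coe_set_eq]
  apply Nat.card_eq_of_bijective
    (Quot.lift (fun P : {P : List Step // InE P ∧ P.length = n} =>
        (⟨enc P.1, P.1, P.2.1, P.2.2, rfl⟩ : Cl n))
      (fun P Q h => Subtype.ext ((dcequiv_iff_enc_eq P.1 Q.1).mp h)))
  constructor
  · intro a b
    induction a using Quot.ind with | _ P =>
    induction b using Quot.ind with | _ Q =>
    intro h
    exact Quot.sound ((dcequiv_iff_enc_eq P.1 Q.1).mpr (congrArg Subtype.val h))
  · rintro ⟨f, P, hP, hl, he⟩
    exact ⟨Quot.mk _ ⟨P, hP, hl⟩, Subtype.ext he⟩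


/-- The number `j n` of DC-equivalence classes of paths of length `n` in ℰ
satisfies `j 0 = 1`, `j 1 = 0`, `j 2 = j 3 = j 4 = 1`, `j 5 = 2`, `j 6 = 2` and
`j n = 2 j(n-1) - j(n-2) + j(n-5) - j(n-6) + j(n-7)` for `n ≥ 7`. -/
theorem count_DCEquiv_classes :
    nClasses DCEquiv 0 = 1 ∧ nClasses DCEquiv 1 = 0 ∧ nClasses DCEquiv 2 = 1 ∧
    nClasses DCEquiv 3 = 1 ∧ nClasses DCEquiv 4 = 1 ∧ nClasses DCEquiv 5 = 2 ∧
    nClasses DCEquiv 6 = 2 ∧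
    ∀ n, 7 ≤ n → (nClasses DCEquiv n : ℤ) =
      2 * nClasses DCEquiv (n - 1) - nClasses DCEquiv (n - 2)
        + nClasses DCEquiv (n - 5) - nClasses DCEquiv (n - 6)
        + nClasses DCEquiv (n - 7) := by
  have hcard : ∀ n, nClasses DCEquiv n = j n := fun n => by
    rw [nClasses_eq_ncard, (Cl_card n).2]
  refine ⟨?_, ?_, ?_, ?_, ?_, ?_, ?_, ?_⟩
  · rw [hcard 0, j0]
  · rw [hcard 1, j1]
  · rw [hcard 2, j2]
  · rw [hcard 3, j3]
  · rw [hcard 4, j4]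
  · rw [hcard 5, j5]
  · rw [hcard 6, j6]
  · intro n hn
    obtain ⟨N, rfl⟩ : ∃ N, n = N + 7 := ⟨n - 7, by omega⟩
    rw [hcard, hcard, hcard, hcard, hcard, hcard,
      show N + 7 - 1 = N + 6 from by omega, show N + 7 - 2 = N + 5 from by omega,
      show N + 7 - 5 = N + 2 from by omega, show N + 7 - 6 = N + 1 from by omega,
      show N + 7 - 7 = N from by omega]
    exact jrec7 N
end

section
/- Let k_n denote the number of CU-equivalence classes of paths of length n in ℰ. Then k_0 = 1, k_1 = 0, k_2 = k_3 = k_4 = 1, and k_n = k_{n−1} + k_{n−2} for all n ≥ 5. -/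
/-- Two paths are `CU`-equivalent when, for every `k ≥ 2`, the occurrences of
the pattern `C_k U` appear at the same positions in both paths. -/
def CUEquiv (P Q : List Step) : Prop :=
  ∀ k, 2 ≤ k → ∀ i : ℕ,
    (P[i]? = some (Step.C k) ∧ P[i + 1]? = some Step.U) ↔
    (Q[i]? = some (Step.C k) ∧ Q[i + 1]? = some Step.U)

namespace CU

abbrev sval (L : List Step) : ℤ := (L.map Step.val).sum

@[simp] lemma sval_nil : sval [] = 0 := rfl
lemma sval_cons (s : Step) (L : List Step) : sval (s :: L) = s.val + sval L := by simp [sval]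
lemma sval_append (X Y : List Step) : sval (X ++ Y) = sval X + sval Y := by simp [sval]

def CFree (L : List Step) : Prop := ∀ k, Step.C k ∉ L

def Ok (h : ℤ) (L : List Step) : Prop :=
  (∀ i, 0 ≤ h + sval (L.take i)) ∧ h + sval L = 0 ∧
    ∀ i k, L[i]? = some (Step.C k) → 2 ≤ k ∧ h + sval (L.take i) = (k : ℤ)

lemma InE_iff (P : List Step) : InE P ↔ Ok 0 P := by
  unfold InE Ok hgt sval
  simp

lemma ok_nil : Ok 0 [] := ⟨by simp, by simp, by simp⟩

lemma ok_cons_U {h : ℤ} {M : List Step} (h0 : 0 ≤ h) (hM : Ok (h + 1) M) :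
    Ok h (Step.U :: M) := by
  obtain ⟨h1, h2, h3⟩ := hM
  refine ⟨?_, ?_, ?_⟩
  · intro i
    cases i with
    | zero => simp; linarith
    | succ i =>
      have := h1 i
      simp only [List.take_succ_cons, sval_cons, Step.val]
      linarith
  · rw [sval_cons]; simp [Step.val]; linarith
  · intro i k hik
    cases i with
    | zero => simp at hik
    | succ i =>
      simp only [List.getElem?_cons_succ] at hik
      obtain ⟨hk, hv⟩ := h3 i k hik
      refine ⟨hk, ?_⟩
      simp only [List.take_succ_cons, sval_cons, Step.val]
      linarith

lemma ok_cons_D {h : ℤ} {M : List Step} (h0 : 1 ≤ h) (hM : Ok (h - 1) M) :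
    Ok h (Step.D :: M) := by
  obtain ⟨h1, h2, h3⟩ := hM
  refine ⟨?_, ?_, ?_⟩
  · intro i
    cases i with
    | zero => simp; linarith
    | succ i =>
      have := h1 i
      simp only [List.take_succ_cons, sval_cons, Step.val]
      linarith
  · rw [sval_cons]; simp [Step.val]; linarith
  · intro i k hik
    cases i with
    | zero => simp at hik
    | succ i =>
      simp only [List.getElem?_cons_succ] at hik
      obtain ⟨hk, hv⟩ := h3 i k hik
      refine ⟨hk, ?_⟩
      simp only [List.take_succ_cons, sval_cons, Step.val]
      linarith

lemma ok_cons_C {k : ℕ} {M : List Step} (hk : 2 ≤ k) (hM : Ok 0 M) :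
    Ok (k : ℤ) (Step.C k :: M) := by
  obtain ⟨h1, h2, h3⟩ := hM
  refine ⟨?_, ?_, ?_⟩
  · intro i
    cases i with
    | zero => simp
    | succ i =>
      have := h1 i
      simp only [List.take_succ_cons, sval_cons, Step.val]
      linarith
  · rw [sval_cons]; simp [Step.val]; linarith
  · intro i k' hik
    cases i with
    | zero =>
      simp only [List.getElem?_cons_zero, Option.some.injEq, Step.C.injEq] at hik
      subst hik
      exact ⟨hk, by simp⟩
    | succ i =>
      simp only [List.getElem?_cons_succ] at hik
      obtain ⟨hk', hv⟩ := h3 i k' hik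
      refine ⟨hk', ?_⟩
      simp only [List.take_succ_cons, sval_cons, Step.val]
      linarith

end CU
namespace CU

@[simp] lemma UDpow_zero : UDpow 0 = [] := rfl
lemma UDpow_succ (a : ℕ) : UDpow (a + 1) = Step.U :: Step.D :: UDpow a := by
  simp [UDpow, List.replicate_succ]

@[simp] lemma Upow_zero : Upow 0 = [] := rfl
lemma Upow_succ (b : ℕ) : Upow (b + 1) = Step.U :: Upow b := by
  simp [Upow, List.replicate_succ]

@[simp] lemma length_UDpow (a : ℕ) : (UDpow a).length = 2 * a := by
  induction a with
  | zero => rfl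
  | succ a ih => rw [UDpow_succ]; simp [ih]; ring

@[simp] lemma length_Upow (b : ℕ) : (Upow b).length = b := by simp [Upow]

lemma cfree_UDpow (a : ℕ) : CFree (UDpow a) := by
  induction a with
  | zero => intro k h; simp at h
  | succ a ih =>
    intro k h
    rw [UDpow_succ] at h
    simp at h
    exact ih k h

lemma cfree_Upow (b : ℕ) : CFree (Upow b) := by
  intro k h
  simp [Upow] at h

lemma cfree_append {X Y : List Step} (hX : CFree X) (hY : CFree Y) : CFree (X ++ Y) := by
  intro k h
  rcases List.mem_append.mp h with h | h
  · exact hX k h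
  · exact hY k h

lemma ok_UDpow_prepend {h : ℤ} {M : List Step} (h0 : 0 ≤ h) (hM : Ok h M) (a : ℕ) :
    Ok h (UDpow a ++ M) := by
  induction a with
  | zero => simpa using hM
  | succ a ih =>
    rw [UDpow_succ]
    refine ok_cons_U h0 (ok_cons_D (by linarith) ?_)
    simpa using ih

lemma ok_Upow_prepend {h : ℤ} {M : List Step} (b : ℕ) (h0 : 0 ≤ h) (hM : Ok (h + b) M) :
    Ok h (Upow b ++ M) := by
  induction b generalizing h with
  | zero => simpa using hM
  | succ b ih =>
    rw [Upow_succ]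
    refine ok_cons_U h0 (ih (by linarith) ?_)
    have : h + 1 + (b : ℤ) = h + ((b : ℕ) + 1 : ℕ) := by push_cast; ring
    rwa [this]

def tl1 (t : ℕ) : List Step :=
  if t % 2 = 1 then Step.D :: UDpow (t / 2) else UDpow ((t - 2) / 2) ++ [Step.U, Step.C 2]

def tl0 (n : ℕ) : List Step :=
  if n % 2 = 0 then UDpow (n / 2) else UDpow ((n - 3) / 2) ++ [Step.U, Step.U, Step.C 2]

lemma ok_UC2 : Ok 1 [Step.U, Step.C 2] := by
  refine ok_cons_U (by norm_num) ?_
  have := ok_cons_C (k := 2) le_rfl ok_nil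
  simpa using this

lemma ok_UDpow (a : ℕ) : Ok 0 (UDpow a) := by
  have := ok_UDpow_prepend (h := 0) le_rfl ok_nil a
  simpa using this

lemma ok_tl1 {t : ℕ} (ht : 1 ≤ t) : Ok 1 (tl1 t) := by
  unfold tl1
  split
  · exact ok_cons_D le_rfl (by simpa using ok_UDpow (t / 2))
  · exact ok_UDpow_prepend (by norm_num) ok_UC2 _

lemma ok_UUC2 : Ok 0 [Step.U, Step.U, Step.C 2] := by
  refine ok_cons_U le_rfl (ok_cons_U (by norm_num) ?_)
  have := ok_cons_C (k := 2) le_rfl ok_nil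
  simpa using this

lemma ok_tl0 {n : ℕ} (hn : n ≠ 1) : Ok 0 (tl0 n) := by
  unfold tl0
  split
  · exact ok_UDpow _
  · exact ok_UDpow_prepend le_rfl ok_UUC2 _

lemma length_tl1 {t : ℕ} (ht : 1 ≤ t) : (tl1 t).length = t := by
  unfold tl1
  split <;> simp <;> omega

lemma length_tl0 {n : ℕ} (hn : n ≠ 1) : (tl0 n).length = n := by
  unfold tl0
  split <;> simp <;> omega

def wsum (d : List (ℕ × ℕ)) : ℕ := (d.map fun p => 2 * p.1 + p.2 + 3).sum

@[simp] lemma wsum_nil : wsum [] = 0 := rfl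
@[simp] lemma wsum_cons (a b : ℕ) (r : List (ℕ × ℕ)) :
    wsum ((a, b) :: r) = 2 * a + b + 3 + wsum r := by simp [wsum]

def bu1 : List (ℕ × ℕ) → ℕ → List Step
  | [], t => tl1 t
  | (a, b) :: r, t => UDpow a ++ (Upow (b + 1) ++ (Step.C (b + 2) :: Step.U :: bu1 r t))

def bu0 (d : List (ℕ × ℕ)) (n : ℕ) : List Step :=
  match d with
  | [] => tl0 n
  | (a, b) :: r => UDpow a ++ (Upow (b + 2) ++ (Step.C (b + 2) :: Step.U ::
      bu1 r (n - (2 * a + b + 4 + wsum r))))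

def MOK (n : ℕ) (d : List (ℕ × ℕ)) : Prop :=
  match d with
  | [] => n ≠ 1
  | _ => wsum d + 2 ≤ n

lemma length_bu1 {t : ℕ} (ht : 1 ≤ t) (d : List (ℕ × ℕ)) :
    (bu1 d t).length = wsum d + t := by
  induction d with
  | nil => simpa [bu1] using length_tl1 ht
  | cons p r ih =>
    obtain ⟨a, b⟩ := p
    simp [bu1, ih]
    omega

lemma ok_bu1 {t : ℕ} (ht : 1 ≤ t) (d : List (ℕ × ℕ)) : Ok 1 (bu1 d t) := by
  induction d with
  | nil => exact ok_tl1 ht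
  | cons p r ih =>
    obtain ⟨a, b⟩ := p
    refine ok_UDpow_prepend (by norm_num) ?_ a
    refine ok_Upow_prepend _ (by norm_num) ?_
    have hC : Ok ((b + 2 : ℕ) : ℤ) (Step.C (b + 2) :: Step.U :: bu1 r t) :=
      ok_cons_C (by omega) (ok_cons_U le_rfl ih)
    have : ((b + 2 : ℕ) : ℤ) = 1 + ((b + 1 : ℕ) : ℤ) := by push_cast; ring
    rwa [this] at hC

lemma length_bu0 {n : ℕ} {d : List (ℕ × ℕ)} (hd : MOK n d) : (bu0 d n).length = n := by
  cases d with
  | nil => exact length_tl0 hd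
  | cons p r =>
    obtain ⟨a, b⟩ := p
    have hb : wsum ((a, b) :: r) + 2 ≤ n := hd
    simp at hb
    have ht : 1 ≤ n - (2 * a + b + 4 + wsum r) := by omega
    simp [bu0, length_bu1 ht]
    omega

lemma ok_bu0 {n : ℕ} {d : List (ℕ × ℕ)} (hd : MOK n d) : Ok 0 (bu0 d n) := by
  cases d with
  | nil => exact ok_tl0 hd
  | cons p r =>
    obtain ⟨a, b⟩ := p
    have hb : wsum ((a, b) :: r) + 2 ≤ n := hd
    simp at hb
    have ht : 1 ≤ n - (2 * a + b + 4 + wsum r) := by omega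
    refine ok_UDpow_prepend le_rfl ?_ a
    refine ok_Upow_prepend _ le_rfl ?_
    have hC : Ok ((b + 2 : ℕ) : ℤ) (Step.C (b + 2) :: Step.U :: bu1 r (n - (2 * a + b + 4 + wsum r))) :=
      ok_cons_C (by omega) (ok_cons_U le_rfl (ok_bu1 ht r))
    have : ((b + 2 : ℕ) : ℤ) = 0 + ((b + 2 : ℕ) : ℤ) := by ring
    rwa [this] at hC

end CU
namespace CU

def phiF (L : List Step) (i : ℕ) : Option ℕ :=
  match L[i]?, L[i + 1]? with
  | some (Step.C k), some Step.U => some k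
  | _, _ => none

lemma phiF_eq_some {L : List Step} {i k : ℕ} :
    phiF L i = some k ↔ L[i]? = some (Step.C k) ∧ L[i + 1]? = some Step.U := by
  cases h1 : L[i]? with
  | none => simp [phiF, h1]
  | some s =>
    cases h2 : L[i + 1]? with
    | none => cases s <;> simp [phiF, h1, h2]
    | some s2 => cases s <;> cases s2 <;> simp [phiF, h1, h2]

lemma phiF_none {L : List Step} {i : ℕ} (h : ∀ k, L[i]? ≠ some (Step.C k)) :
    phiF L i = none := by
  cases o : phiF L i with
  | none => rfl
  | some k => exact absurd (phiF_eq_some.mp o).1 (h k)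

lemma phiF_cons_succ (x : Step) (L : List Step) (i : ℕ) :
    phiF (x :: L) (i + 1) = phiF L i := by
  simp [phiF]

lemma phiF_append {X M : List Step} (hX : CFree X) (i : ℕ) :
    phiF (X ++ M) i = if i < X.length then none else phiF M (i - X.length) := by
  split
  · rename_i hi
    refine phiF_none fun k hk => ?_
    rw [List.getElem?_append_left hi] at hk
    exact hX k (List.mem_of_getElem? hk)
  · rename_i hi
    push_neg at hi
    unfold phiF
    rw [List.getElem?_append_right hi, List.getElem?_append_right (by omega)]
    have : i + 1 - X.length = i - X.length + 1 := by omega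
    rw [this]

lemma phiF_single (s : Step) (j : ℕ) : phiF [s] j = none := by
  cases j with
  | zero => cases s <;> simp [phiF]
  | succ j => refine phiF_none fun k hk => by simp at hk

lemma phiF_tl1 (t : ℕ) (j : ℕ) : phiF (tl1 t) j = none := by
  unfold tl1
  split
  · refine phiF_none fun k hk => ?_
    have : Step.C k ∈ Step.D :: UDpow (t / 2) := List.mem_of_getElem? hk
    simp at this
    exact cfree_UDpow _ k this
  · have : UDpow ((t - 2) / 2) ++ [Step.U, Step.C 2] =
        (UDpow ((t - 2) / 2) ++ [Step.U]) ++ [Step.C 2] := by simp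
    rw [this, phiF_append (cfree_append (cfree_UDpow _) (by intro k h; simp at h))]
    split
    · rfl
    · exact phiF_single _ _

lemma phiF_tl0 (n : ℕ) (j : ℕ) : phiF (tl0 n) j = none := by
  unfold tl0
  split
  · refine phiF_none fun k hk => cfree_UDpow _ k (List.mem_of_getElem? hk)
  · have : UDpow ((n - 3) / 2) ++ [Step.U, Step.U, Step.C 2] =
        (UDpow ((n - 3) / 2) ++ [Step.U, Step.U]) ++ [Step.C 2] := by simp
    rw [this, phiF_append (cfree_append (cfree_UDpow _) (by intro k h; simp at h))]
    split
    · rfl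
    · exact phiF_single _ _

def pf1 : List (ℕ × ℕ) → ℕ → Option ℕ
  | [], _ => none
  | (a, b) :: r, j =>
      if j = 2 * a + b + 1 then some (b + 2)
      else if 2 * a + b + 3 ≤ j then pf1 r (j - (2 * a + b + 3)) else none

def pf0 : List (ℕ × ℕ) → ℕ → Option ℕ
  | [], _ => none
  | (a, b) :: r, j =>
      if j = 2 * a + b + 2 then some (b + 2)
      else if 2 * a + b + 4 ≤ j then pf1 r (j - (2 * a + b + 4)) else none

lemma phiF_CU {M : List Step} {k : ℕ} :
    phiF (Step.C k :: Step.U :: M) 0 = some k := by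
  simp [phiF]

lemma phiF_bu1 {t : ℕ} (ht : 1 ≤ t) (d : List (ℕ × ℕ)) (j : ℕ) :
    phiF (bu1 d t) j = pf1 d j := by
  induction d generalizing j with
  | nil => simp [bu1, phiF_tl1, pf1]
  | cons p r ih =>
    obtain ⟨a, b⟩ := p
    show phiF ((UDpow a ++ (Upow (b + 1) ++ _))) j = _
    rw [← List.append_assoc]
    have hX : CFree (UDpow a ++ Upow (b + 1)) := cfree_append (cfree_UDpow a) (cfree_Upow _)
    rw [phiF_append hX j]
    have hlen : (UDpow a ++ Upow (b + 1)).length = 2 * a + b + 1 := by simp; ring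
    rw [hlen]
    rcases Nat.lt_trichotomy j (2 * a + b + 1) with hj | hj | hj
    · rw [if_pos hj]
      simp only [pf1]
      rw [if_neg (by omega), if_neg (by omega)]
    · subst hj
      rw [if_neg (by omega)]
      simp only [Nat.sub_self]
      rw [phiF_CU]
      simp only [pf1]
      simp
    · rw [if_neg (by omega)]
      rcases Nat.exists_eq_add_of_le (Nat.succ_le_of_lt hj) with ⟨j', hj'⟩
      have hj2 : j - (2 * a + b + 1) = j' + 1 := by omega
      rw [hj2]
      rw [phiF_cons_succ]
      cases j' with
      | zero =>
        have : phiF (Step.U :: bu1 r t) 0 = none := by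
          refine phiF_none fun k hk => by simp at hk
        rw [this]
        simp only [pf1]
        rw [if_neg (by omega), if_neg (by omega)]
      | succ j'' =>
        rw [phiF_cons_succ, ih]
        simp only [pf1]
        rw [if_neg (by omega), if_pos (by omega)]
        congr 1
        omega

lemma phiF_bu0 {n : ℕ} {d : List (ℕ × ℕ)} (hd : MOK n d) (j : ℕ) :
    phiF (bu0 d n) j = pf0 d j := by
  cases d with
  | nil => simp [bu0, phiF_tl0, pf0]
  | cons p r =>
    obtain ⟨a, b⟩ := p
    have hb : wsum ((a, b) :: r) + 2 ≤ n := hd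
    simp at hb
    have ht : 1 ≤ n - (2 * a + b + 4 + wsum r) := by omega
    show phiF ((UDpow a ++ (Upow (b + 2) ++ _))) j = _
    rw [← List.append_assoc]
    have hX : CFree (UDpow a ++ Upow (b + 2)) := cfree_append (cfree_UDpow a) (cfree_Upow _)
    rw [phiF_append hX j]
    have hlen : (UDpow a ++ Upow (b + 2)).length = 2 * a + b + 2 := by simp; ring
    rw [hlen]
    rcases Nat.lt_trichotomy j (2 * a + b + 2) with hj | hj | hj
    · rw [if_pos hj]
      simp only [pf0]
      rw [if_neg (by omega), if_neg (by omega)]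
    · subst hj
      rw [if_neg (by omega)]
      simp only [Nat.sub_self]
      rw [phiF_CU]
      simp only [pf0]
      simp
    · rw [if_neg (by omega)]
      rcases Nat.exists_eq_add_of_le (Nat.succ_le_of_lt hj) with ⟨j', hj'⟩
      have hj2 : j - (2 * a + b + 2) = j' + 1 := by omega
      rw [hj2]
      rw [phiF_cons_succ]
      cases j' with
      | zero =>
        have : phiF (Step.U :: bu1 r (n - (2 * a + b + 4 + wsum r))) 0 = none := by
          refine phiF_none fun k hk => by simp at hk
        rw [this]
        simp only [pf0]
        rw [if_neg (by omega), if_neg (by omega)]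
      | succ j'' =>
        rw [phiF_cons_succ, phiF_bu1 ht]
        simp only [pf0]
        rw [if_neg (by omega), if_pos (by omega)]
        congr 1
        omega

end CU
namespace CU

lemma pf1_inj : ∀ d d' : List (ℕ × ℕ), (∀ j, pf1 d j = pf1 d' j) → d = d' := by
  intro d
  induction d with
  | nil =>
    intro d' h
    cases d' with
    | nil => rfl
    | cons p r =>
      obtain ⟨a, b⟩ := p
      have := h (2 * a + b + 1)
      simp [pf1] at this
  | cons p r ih =>
    intro d' h
    obtain ⟨a, b⟩ := p
    cases d' with
    | nil =>
      have := h (2 * a + b + 1)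
      simp [pf1] at this
    | cons p' r' =>
      obtain ⟨a', b'⟩ := p'
      rcases Nat.lt_trichotomy (2 * a + b + 1) (2 * a' + b' + 1) with hlt | heq | hlt
      · have := h (2 * a + b + 1)
        simp only [pf1, if_true] at this
        rw [if_neg (by omega), if_neg (by omega)] at this
        simp at this
      · have h1 := h (2 * a + b + 1)
        simp only [pf1] at h1
        rw [if_pos heq] at h1
        have hb : b = b' := by simp at h1; omega
        have ha : a = a' := by omega
        subst hb; subst ha
        have : r = r' := by
          apply ih
          intro j
          have := h (j + (2 * a + b + 3))
          simp only [pf1] at this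
          rw [if_neg (by omega), if_pos (by omega), if_neg (by omega), if_pos (by omega)] at this
          simpa using this
        rw [this]
      · have := h (2 * a' + b' + 1)
        simp only [pf1] at this
        rw [if_neg (by omega), if_neg (by omega)] at this
        simp at this

lemma pf0_inj : ∀ d d' : List (ℕ × ℕ), (∀ j, pf0 d j = pf0 d' j) → d = d' := by
  intro d d' h
  cases d with
  | nil =>
    cases d' with
    | nil => rfl
    | cons p r =>
      obtain ⟨a, b⟩ := p
      have := h (2 * a + b + 2)
      simp [pf0] at this
  | cons p r =>
    obtain ⟨a, b⟩ := p
    cases d' with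
    | nil =>
      have := h (2 * a + b + 2)
      simp [pf0] at this
    | cons p' r' =>
      obtain ⟨a', b'⟩ := p'
      rcases Nat.lt_trichotomy (2 * a + b + 2) (2 * a' + b' + 2) with hlt | heq | hlt
      · have := h (2 * a + b + 2)
        simp only [pf0, if_true] at this
        rw [if_neg (by omega), if_neg (by omega)] at this
        simp at this
      · have h1 := h (2 * a + b + 2)
        simp only [pf0] at h1
        rw [if_pos heq] at h1
        have hb : b = b' := by simp at h1; omega
        have ha : a = a' := by omega
        subst hb; subst ha
        have : r = r' := by
          apply pf1_inj
          intro j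
          have := h (j + (2 * a + b + 4))
          simp only [pf0] at this
          rw [if_neg (by omega), if_pos (by omega), if_neg (by omega), if_pos (by omega)] at this
          simpa using this
        rw [this]
      · have := h (2 * a' + b' + 2)
        simp only [pf0] at this
        rw [if_neg (by omega), if_neg (by omega)] at this
        simp at this

end CU
namespace CU

lemma ok_suffix {h h₂ : ℤ} {L : List Step} (hOk : Ok h L) (m : ℕ)
    (hsv : h + sval (L.take m) = h₂) : Ok h₂ (L.drop m) := by
  obtain ⟨h1, h2, h3⟩ := hOk
  refine ⟨?_, ?_, ?_⟩
  · intro i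
    have := h1 (m + i)
    rw [List.take_add, sval_append] at this
    linarith [this, hsv]
  · have : sval (L.take m) + sval (L.drop m) = sval L := by
      rw [← sval_append, List.take_append_drop]
    linarith
  · intro i k hik
    rw [List.getElem?_drop] at hik
    obtain ⟨hk, hv⟩ := h3 (m + i) k hik
    refine ⟨hk, ?_⟩
    rw [List.take_add, sval_append] at hv
    linarith

lemma cfree_sval {X : List Step} (hX : CFree X) :
    ∃ u v : ℕ, X.length = u + v ∧ sval X = (u : ℤ) - v := by
  induction X with
  | nil => exact ⟨0, 0, by simp, by simp⟩
  | cons s L ih =>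
    have hL : CFree L := fun k hk => hX k (List.mem_cons_of_mem _ hk)
    obtain ⟨u, v, h1, h2⟩ := ih hL
    cases s with
    | U => exact ⟨u + 1, v, by simp [h1]; omega, by rw [sval_cons, h2]; simp [Step.val]; push_cast; ring⟩
    | D => exact ⟨u, v + 1, by simp [h1]; omega, by rw [sval_cons, h2]; simp [Step.val]; push_cast; ring⟩
    | C k => exact absurd List.mem_cons_self (hX k)

lemma no_len1 {P : List Step} (hOk : Ok 0 P) : P.length ≠ 1 := by
  intro hlen
  obtain ⟨s, rfl⟩ := List.length_eq_one_iff.mp hlen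
  obtain ⟨h1, h2, h3⟩ := hOk
  cases s with
  | U => rw [sval_cons] at h2; simp [Step.val] at h2
  | D =>
    have := h1 1
    simp [sval_cons, Step.val] at this
  | C k =>
    obtain ⟨hk, hv⟩ := h3 0 k (by simp)
    simp at hv
    omega

lemma phiF_drop (L : List Step) (m i : ℕ) : phiF (L.drop m) i = phiF L (m + i) := by
  unfold phiF
  rw [List.getElem?_drop, List.getElem?_drop]
  have : m + (i + 1) = m + i + 1 := by omega
  rw [this]

lemma sval_take_p2 {L : List Step} {p k : ℕ} {h : ℤ}
    (hpC : L[p]? = some (Step.C k)) (hU : L[p + 1]? = some Step.U)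
    (hsv : h + sval (L.take p) = (k : ℤ)) :
    h + sval (L.take (p + 2)) = 1 := by
  rw [List.take_succ, List.take_succ, hpC, hU]
  simp [sval_append, sval_cons, Step.val]
  linarith

lemma next_is_U {L : List Step} {p k : ℕ} {h : ℤ} (hOk : Ok h L)
    (hpC : L[p]? = some (Step.C k)) (hlt : p + 1 < L.length) :
    L[p + 1]? = some Step.U := by
  obtain ⟨hk2, hsv⟩ := hOk.2.2 p k hpC
  cases o : L[p + 1]? with
  | none => rw [List.getElem?_eq_none_iff] at o; omega
  | some s =>
    cases s with
    | U => rfl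
    | D =>
      have hnn := hOk.1 (p + 2)
      have : h + sval (L.take (p + 2)) = h + sval (L.take p) + (-(k : ℤ)) + (-1) := by
        rw [List.take_succ, List.take_succ, hpC, o]
        simp [sval_append, sval_cons, Step.val]
        ring
      rw [this, hsv] at hnn
      have : (2 : ℤ) ≤ k := by exact_mod_cast hk2
      linarith
    | C k' =>
      obtain ⟨hk2', hsv'⟩ := hOk.2.2 (p + 1) k' o
      have : h + sval (L.take (p + 1)) = h + sval (L.take p) + (-(k : ℤ)) := by
        rw [List.take_succ, hpC]
        simp [sval_append, sval_cons, Step.val]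
        ring
      rw [this, hsv] at hsv'
      have : (2 : ℤ) ≤ k' := by exact_mod_cast hk2'
      linarith

end CU
namespace CU

open Classical in
lemma ext1 : ∀ N L, L.length ≤ N → Ok 1 L →
    ∃ d, (d = [] → 1 ≤ L.length) ∧ (d ≠ [] → wsum d + 1 ≤ L.length) ∧
      ∀ j, phiF L j = pf1 d j := by
  intro N
  induction N with
  | zero =>
    intro L hlen hOk
    interval_cases hL : L.length
    · rw [List.length_eq_zero_iff] at hL
      subst hL
      have := hOk.2.1
      simp at this
  | succ N ih =>
    intro L hlen hOk
    by_cases hex : ∃ p, p + 1 < L.length ∧ ∃ k, L[p]? = some (Step.C k)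
    · set p := Nat.find hex with hp
      obtain ⟨hplt, k, hpC⟩ := Nat.find_spec hex
      have hmin : ∀ q, q < p → ¬(q + 1 < L.length ∧ ∃ k, L[q]? = some (Step.C k)) :=
        fun q hq => Nat.find_min hex hq
      obtain ⟨hk2, hsv⟩ := hOk.2.2 p k hpC
      have hU : L[p + 1]? = some Step.U := next_is_U hOk hpC hplt
      set M := L.drop (p + 2) with hM
      have hOkM : Ok 1 M := ok_suffix hOk (p + 2) (sval_take_p2 hpC hU hsv)
      have hMlen : M.length = L.length - (p + 2) := List.length_drop
      obtain ⟨d₂, hb1, hb2, hphi⟩ := ih M (by omega) hOkM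
      have hMpos : wsum d₂ + 1 ≤ M.length := by
        cases d₂ with
        | nil => simpa using hb1 rfl
        | cons q r => exact hb2 (by simp)
      -- the prefix is catastrophe-free
      have hXfree : CFree (L.take p) := by
        intro k' hk'
        obtain ⟨q, hq⟩ := List.mem_iff_getElem?.mp hk'
        obtain ⟨hqlt, hqval⟩ := List.getElem?_eq_some_iff.mp hq
        have hqp : q < p := by
          have : (L.take p).length = min p L.length := List.length_take
          omega
        refine hmin q hqp ⟨by omega, k', ?_⟩
        rw [← List.getElem?_take_of_lt hqp, hq]
      obtain ⟨u, v, huv1, huv2⟩ := cfree_sval hXfree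
      have hXlen : (L.take p).length = p := by
        have : (L.take p).length = min p L.length := List.length_take
        omega
      have hsvX : sval (L.take p) = (k : ℤ) - 1 := by linarith
      have hk1 : (u : ℤ) - v = (k : ℤ) - 1 := by rw [← huv2, hsvX]
      set a := v with ha
      set b := k - 2 with hb
      have hpab : p = 2 * a + b + 1 ∧ k = b + 2 := by
        constructor <;> omega
      refine ⟨(a, b) :: d₂, by simp, fun _ => ?_, ?_⟩
      · have : wsum ((a, b) :: d₂) = 2 * a + b + 3 + wsum d₂ := by simp
        omega
      · intro j
        by_cases hj1 : j < p
        · have hnone : phiF L j = none := by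
            refine phiF_none fun k' hk' => hmin j hj1 ⟨by omega, k', hk'⟩
          rw [hnone]
          simp only [pf1]
          rw [if_neg (by omega), if_neg (by omega)]
        · by_cases hj2 : j = p
          · subst hj2
            rw [phiF_eq_some.mpr ⟨hpC, hU⟩]
            simp only [pf1]
            rw [if_pos (by omega)]
            congr 1
            omega
          · by_cases hj3 : j = p + 1
            · subst hj3
              have hnone : phiF L (p + 1) = none := by
                refine phiF_none fun k' hk' => by rw [hU] at hk'; simp at hk'
              rw [hnone]
              simp only [pf1]
              rw [if_neg (by omega), if_neg (by omega)]
            · have hj4 : p + 2 ≤ j := by omega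
              obtain ⟨j', rfl⟩ := Nat.exists_eq_add_of_le hj4
              have h1 : phiF L (p + 2 + j') = phiF M j' := (phiF_drop L (p + 2) j').symm
              rw [h1, hphi]
              simp only [pf1]
              rw [if_neg (by omega), if_pos (by omega)]
              congr 1
              omega
    · refine ⟨[], fun _ => ?_, fun h => absurd rfl h, fun j => ?_⟩
      · have : L ≠ [] := by
          intro h
          subst h
          have := hOk.2.1
          simp at this
        have := List.length_pos_iff.mpr this
        omega
      · cases o : phiF L j with
        | none => simp [pf1]
        | some k =>
          obtain ⟨hC, hU⟩ := phiF_eq_some.mp o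
          obtain ⟨hlt', _⟩ := List.getElem?_eq_some_iff.mp hU
          exact absurd ⟨j, hlt', k, hC⟩ hex

open Classical in
lemma ext0 {P : List Step} (hOk : Ok 0 P) :
    ∃ d, (d = [] → P.length ≠ 1) ∧ (d ≠ [] → wsum d + 2 ≤ P.length) ∧
      ∀ j, phiF P j = pf0 d j := by
  by_cases hex : ∃ p, p + 1 < P.length ∧ ∃ k, P[p]? = some (Step.C k)
  · set p := Nat.find hex with hp
    obtain ⟨hplt, k, hpC⟩ := Nat.find_spec hex
    have hmin : ∀ q, q < p → ¬(q + 1 < P.length ∧ ∃ k, P[q]? = some (Step.C k)) :=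
      fun q hq => Nat.find_min hex hq
    obtain ⟨hk2, hsv⟩ := hOk.2.2 p k hpC
    have hU : P[p + 1]? = some Step.U := next_is_U hOk hpC hplt
    set M := P.drop (p + 2) with hM
    have hOkM : Ok 1 M := ok_suffix hOk (p + 2) (sval_take_p2 hpC hU hsv)
    have hMlen : M.length = P.length - (p + 2) := List.length_drop
    obtain ⟨d₂, hb1, hb2, hphi⟩ := ext1 M.length M le_rfl hOkM
    have hMpos : wsum d₂ + 1 ≤ M.length := by
      cases d₂ with
      | nil => simpa using hb1 rfl
      | cons q r => exact hb2 (by simp)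
    have hXfree : CFree (P.take p) := by
      intro k' hk'
      obtain ⟨q, hq⟩ := List.mem_iff_getElem?.mp hk'
      obtain ⟨hqlt, hqval⟩ := List.getElem?_eq_some_iff.mp hq
      have hqp : q < p := by
        have : (P.take p).length = min p P.length := List.length_take
        omega
      refine hmin q hqp ⟨by omega, k', ?_⟩
      rw [← List.getElem?_take_of_lt hqp, hq]
    obtain ⟨u, v, huv1, huv2⟩ := cfree_sval hXfree
    have hXlen : (P.take p).length = p := by
      have : (P.take p).length = min p P.length := List.length_take
      omega
    have hsvX : sval (P.take p) = (k : ℤ) := by linarith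
    have hk1 : (u : ℤ) - v = (k : ℤ) := by rw [← huv2, hsvX]
    set a := v with ha
    set b := k - 2 with hb
    have hpab : p = 2 * a + b + 2 ∧ k = b + 2 := by
      constructor <;> omega
    refine ⟨(a, b) :: d₂, by simp, fun _ => ?_, ?_⟩
    · have : wsum ((a, b) :: d₂) = 2 * a + b + 3 + wsum d₂ := by simp
      omega
    · intro j
      by_cases hj1 : j < p
      · have hnone : phiF P j = none := by
          refine phiF_none fun k' hk' => hmin j hj1 ⟨by omega, k', hk'⟩
        rw [hnone]
        simp only [pf0]
        rw [if_neg (by omega), if_neg (by omega)]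
      · by_cases hj2 : j = p
        · subst hj2
          rw [phiF_eq_some.mpr ⟨hpC, hU⟩]
          simp only [pf0]
          rw [if_pos (by omega)]
          congr 1
          omega
        · by_cases hj3 : j = p + 1
          · subst hj3
            have hnone : phiF P (p + 1) = none := by
              refine phiF_none fun k' hk' => by rw [hU] at hk'; simp at hk'
            rw [hnone]
            simp only [pf0]
            rw [if_neg (by omega), if_neg (by omega)]
          · have hj4 : p + 2 ≤ j := by omega
            obtain ⟨j', rfl⟩ := Nat.exists_eq_add_of_le hj4
            have h1 : phiF P (p + 2 + j') = phiF M j' := (phiF_drop P (p + 2) j').symm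
            rw [h1, hphi]
            simp only [pf0]
            rw [if_neg (by omega), if_pos (by omega)]
            congr 1
            omega
  · refine ⟨[], fun _ => no_len1 hOk, fun h => absurd rfl h, fun j => ?_⟩
    cases o : phiF P j with
    | none => simp [pf0]
    | some k =>
      obtain ⟨hC, hU⟩ := phiF_eq_some.mp o
      obtain ⟨hlt', _⟩ := List.getElem?_eq_some_iff.mp hU
      exact absurd ⟨j, hlt', k, hC⟩ hex

end CU
namespace CU

lemma cue_iff {P Q : List Step} (hP : InE P) (hQ : InE Q) :
    CUEquiv P Q ↔ ∀ j, phiF P j = phiF Q j := by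
  constructor
  · intro h j
    cases oP : phiF P j with
    | none =>
      cases oQ : phiF Q j with
      | none => rfl
      | some k =>
        obtain ⟨hC, hU⟩ := phiF_eq_some.mp oQ
        have hk2 : 2 ≤ k := (hQ.2.2 j k hC).1
        have := (h k hk2 j).mpr ⟨hC, hU⟩
        rw [phiF_eq_some.mpr this] at oP
        exact absurd oP (by simp)
    | some k =>
      obtain ⟨hC, hU⟩ := phiF_eq_some.mp oP
      have hk2 : 2 ≤ k := (hP.2.2 j k hC).1
      have := (h k hk2 j).mp ⟨hC, hU⟩
      rw [phiF_eq_some.mpr this]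
  · intro h k hk2 i
    constructor
    · intro hPi
      exact phiF_eq_some.mp (by rw [← h i]; exact phiF_eq_some.mpr hPi)
    · intro hQi
      exact phiF_eq_some.mp (by rw [h i]; exact phiF_eq_some.mpr hQi)

lemma mok_of_ext {n : ℕ} {d : List (ℕ × ℕ)}
    (h1 : d = [] → n ≠ 1) (h2 : d ≠ [] → wsum d + 2 ≤ n) : MOK n d := by
  cases d with
  | nil => exact h1 rfl
  | cons p r => exact h2 (by simp)

noncomputable def dOf (n : ℕ) (P : {P : List Step // InE P ∧ P.length = n}) :
    {d : List (ℕ × ℕ) // MOK n d} :=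
  ⟨(ext0 ((InE_iff P.1).mp P.2.1)).choose,
    mok_of_ext
      (fun h => by
        have := (ext0 ((InE_iff P.1).mp P.2.1)).choose_spec.1 h
        have h2 := P.2.2
        omega)
      (fun h => by
        have := (ext0 ((InE_iff P.1).mp P.2.1)).choose_spec.2.1 h
        have h2 := P.2.2
        omega)⟩

lemma dOf_spec (n : ℕ) (P : {P : List Step // InE P ∧ P.length = n}) :
    ∀ j, phiF P.1 j = pf0 (dOf n P).1 j :=
  ((ext0 ((InE_iff P.1).mp P.2.1)).choose_spec).2.2

lemma nClasses_eq (n : ℕ) :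
    nClasses CUEquiv n = Nat.card {d : List (ℕ × ℕ) // MOK n d} := by
  unfold nClasses
  refine Nat.card_eq_of_bijective
    (Quot.lift (dOf n) ?_) ⟨?_, ?_⟩
  · intro P Q hPQ
    have hphi := (cue_iff P.2.1 Q.2.1).mp hPQ
    apply Subtype.ext
    apply pf0_inj
    intro j
    rw [← dOf_spec n P, ← dOf_spec n Q]
    exact hphi j
  · intro x y
    induction x using Quot.ind with | _ P =>
    induction y using Quot.ind with | _ Q =>
    intro hxy
    simp only [Quot.lift_mk] at hxy
    apply Quot.sound
    refine (cue_iff P.2.1 Q.2.1).mpr fun j => ?_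
    rw [dOf_spec n P, dOf_spec n Q, hxy]
  · intro ⟨d, hd⟩
    have hIn : InE (bu0 d n) := (InE_iff _).mpr (ok_bu0 hd)
    have hlen : (bu0 d n).length = n := length_bu0 hd
    refine ⟨Quot.mk _ ⟨bu0 d n, hIn, hlen⟩, ?_⟩
    simp only [Quot.lift_mk]
    apply Subtype.ext
    apply pf0_inj
    intro j
    rw [← dOf_spec n ⟨bu0 d n, hIn, hlen⟩]
    exact phiF_bu0 hd j

end CU
namespace CU

lemma wsum_ge {d : List (ℕ × ℕ)} (h : d ≠ []) : 3 ≤ wsum d := by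
  cases d with
  | nil => exact absurd rfl h
  | cons p r => obtain ⟨a, b⟩ := p; simp; omega

lemma mok_iff {n : ℕ} (hn : 2 ≤ n) (d : List (ℕ × ℕ)) : MOK n d ↔ wsum d ≤ n - 2 := by
  cases d with
  | nil => show n ≠ 1 ↔ _ ; simp; omega
  | cons p r =>
    show wsum _ + 2 ≤ n ↔ _
    omega

def e2 (m : ℕ) (d : List (ℕ × ℕ)) : List (ℕ × ℕ) :=
  if wsum d = m + 1 then
    (match d with
     | [] => []
     | (a, b) :: r => (a + 1, b) :: r)
  else (0, m - wsum d) :: d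

def eE (m : ℕ) (x : {d : List (ℕ × ℕ) // wsum d ≤ m + 2} ⊕ {d : List (ℕ × ℕ) // wsum d ≤ m + 1}) :
    {d : List (ℕ × ℕ) // wsum d ≤ m + 3} :=
  match x with
  | .inl d => ⟨d.1, by omega⟩
  | .inr d => ⟨e2 m d.1, by
      have hd := d.2
      unfold e2
      split
      · rename_i h
        match hd2 : d.1, h with
        | (a, b) :: r, h => simp at h ⊢; omega
        | [], h => simp at h
      · rename_i h
        simp
        omega⟩

lemma wsum_e2 {m : ℕ} {d : List (ℕ × ℕ)} (hd : wsum d ≤ m + 1) : wsum (e2 m d) = m + 3 := by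
  unfold e2
  split
  · rename_i h
    match hd2 : d, h with
    | (a, b) :: r, h => simp at h ⊢; omega
    | [], h => simp at h
  · rename_i h
    simp
    omega

lemma e2_inj {m : ℕ} {d d' : List (ℕ × ℕ)} (hd : wsum d ≤ m + 1) (hd' : wsum d' ≤ m + 1)
    (h : e2 m d = e2 m d') : d = d' := by
  have hnil : ¬ (wsum ([] : List (ℕ × ℕ)) = m + 1) := by simp only [wsum_nil]; omega
  cases d with
  | nil =>
    cases d' with
    | nil => rfl
    | cons p' r' =>
      obtain ⟨a', b'⟩ := p'
      exfalso
      unfold e2 at h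
      rw [if_neg hnil] at h
      by_cases c2 : wsum ((a', b') :: r') = m + 1
      · rw [if_pos c2] at h
        simp at h
      · rw [if_neg c2] at h
        simp at h
  | cons p r =>
    obtain ⟨a, b⟩ := p
    cases d' with
    | nil =>
      exfalso
      unfold e2 at h
      by_cases c1 : wsum ((a, b) :: r) = m + 1
      · rw [if_pos c1, if_neg hnil] at h
        simp at h
      · rw [if_neg c1, if_neg hnil] at h
        simp at h
    | cons p' r' =>
      obtain ⟨a', b'⟩ := p'
      unfold e2 at h
      by_cases c1 : wsum ((a, b) :: r) = m + 1 <;> by_cases c2 : wsum ((a', b') :: r') = m + 1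
      · rw [if_pos c1, if_pos c2] at h
        simp only [List.cons.injEq, Prod.mk.injEq] at h
        obtain ⟨⟨ha, hb⟩, hr⟩ := h
        have ha' : a = a' := by omega
        subst ha'; subst hb; subst hr; rfl
      · rw [if_pos c1, if_neg c2] at h
        simp at h
      · rw [if_neg c1, if_pos c2] at h
        simp at h
      · rw [if_neg c1, if_neg c2] at h
        simp only [List.cons.injEq, Prod.mk.injEq] at h
        obtain ⟨-, ⟨ha, hb⟩, hr⟩ := h
        subst ha; subst hb; subst hr; rfl

lemma eE_bij (m : ℕ) : Function.Bijective (eE m) := by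
  constructor
  · have hval : ∀ x y, eE m x = eE m y → (eE m x).1 = (eE m y).1 := fun x y h => by rw [h]
    intro x y hxy
    match x, y with
    | .inl d, .inl d' =>
      have h1 : d.1 = d'.1 := hval _ _ hxy
      rw [Sum.inl.injEq]
      exact Subtype.ext h1
    | .inl d, .inr d' =>
      exfalso
      have h1 : d.1 = e2 m d'.1 := hval _ _ hxy
      have h2 := wsum_e2 d'.2
      have := d.2
      rw [h1, h2] at this
      omega
    | .inr d, .inl d' =>
      exfalso
      have h1 : e2 m d.1 = d'.1 := hval _ _ hxy
      have h2 := wsum_e2 d.2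
      have := d'.2
      rw [← h1, h2] at this
      omega
    | .inr d, .inr d' =>
      rw [Sum.inr.injEq]
      exact Subtype.ext (e2_inj d.2 d'.2 (hval _ _ hxy))
  · intro ⟨d, hd⟩
    by_cases h : wsum d ≤ m + 2
    · exact ⟨.inl ⟨d, h⟩, rfl⟩
    · have hw : wsum d = m + 3 := by omega
      cases d with
      | nil => simp at hw
      | cons p r =>
        obtain ⟨a, b⟩ := p
        cases a with
        | zero =>
          have hr : wsum r ≤ m + 1 := by simp at hw; omega
          refine ⟨.inr ⟨r, hr⟩, ?_⟩
          apply Subtype.ext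
          show e2 m r = _
          unfold e2
          rw [if_neg (by simp at hw; omega)]
          simp at hw ⊢
          omega
        | succ a' =>
          have hr : wsum ((a', b) :: r) ≤ m + 1 := by simp at hw ⊢; omega
          refine ⟨.inr ⟨(a', b) :: r, hr⟩, ?_⟩
          apply Subtype.ext
          show e2 m ((a', b) :: r) = _
          unfold e2
          rw [if_pos (by simp at hw ⊢; omega)]

lemma bt_finite : ∀ m, Finite {d : List (ℕ × ℕ) // wsum d ≤ m} := by
  intro m
  induction m using Nat.strong_induction_on with
  | _ m ih =>
    match m with
    | 0 | 1 | 2 =>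
      refine Finite.of_surjective (fun _ : PUnit => ⟨[], by simp⟩) ?_
      intro ⟨d, hd⟩
      refine ⟨PUnit.unit, ?_⟩
      apply Subtype.ext
      show ([] : List (ℕ × ℕ)) = d
      by_contra h
      have := wsum_ge (fun hh => h hh.symm)
      omega
    | (m' + 3) =>
      haveI := ih (m' + 2) (by omega)
      haveI := ih (m' + 1) (by omega)
      exact Finite.of_surjective (eE m') (eE_bij m').2

noncomputable def Kc (m : ℕ) : ℕ := Nat.card {d : List (ℕ × ℕ) // wsum d ≤ m}

lemma Kc_small {m : ℕ} (hm : m ≤ 2) : Kc m = 1 := by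
  rw [Kc, Nat.card_eq_one_iff_unique]
  constructor
  · constructor
    intro ⟨d, hd⟩ ⟨d', hd'⟩
    have h1 : d = [] := by
      by_contra h
      have := wsum_ge h
      omega
    have h2 : d' = [] := by
      by_contra h
      have := wsum_ge h
      omega
    simp [h1, h2]
  · exact ⟨⟨[], by simp⟩⟩

lemma Kc_rec (m : ℕ) : Kc (m + 3) = Kc (m + 2) + Kc (m + 1) := by
  haveI := bt_finite (m + 2)
  haveI := bt_finite (m + 1)
  rw [Kc, ← Nat.card_eq_of_bijective (eE m) (eE_bij m), Nat.card_sum]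
  rfl

lemma nclasses_ge2 {n : ℕ} (hn : 2 ≤ n) : nClasses CUEquiv n = Kc (n - 2) := by
  rw [nClasses_eq, Kc]
  exact Nat.card_congr (Equiv.subtypeEquivRight fun d => mok_iff hn d)

end CU
namespace CU

lemma mok_zero {d : List (ℕ × ℕ)} (hd : MOK 0 d) : d = [] := by
  cases d with
  | nil => rfl
  | cons p r =>
    exfalso
    have : wsum (p :: r) + 2 ≤ 0 := hd
    omega

lemma mok_one_empty : IsEmpty {d : List (ℕ × ℕ) // MOK 1 d} := by
  constructor
  intro ⟨d, hd⟩
  cases d with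
  | nil => exact hd rfl
  | cons p r =>
    have : wsum (p :: r) + 2 ≤ 1 := hd
    have := wsum_ge (d := p :: r) (by simp)
    omega

end CU

/-- The number `k n` of CU-equivalence classes of paths of length `n` in ℰ
satisfies `k 0 = 1`, `k 1 = 0`, `k 2 = k 3 = k 4 = 1` and
`k n = k (n-1) + k (n-2)` for `n ≥ 5`. -/
theorem count_CUEquiv_classes :
    nClasses CUEquiv 0 = 1 ∧ nClasses CUEquiv 1 = 0 ∧ nClasses CUEquiv 2 = 1 ∧
    nClasses CUEquiv 3 = 1 ∧ nClasses CUEquiv 4 = 1 ∧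
    ∀ n, 5 ≤ n → nClasses CUEquiv n = nClasses CUEquiv (n - 1) + nClasses CUEquiv (n - 2) := by
  have h0 : nClasses CUEquiv 0 = 1 := by
    rw [CU.nClasses_eq, Nat.card_eq_one_iff_unique]
    refine ⟨⟨fun d d' => ?_⟩, ⟨⟨[], by intro h; exact absurd h (by omega)⟩⟩⟩
    have h1 := CU.mok_zero d.2
    have h2 := CU.mok_zero d'.2
    apply Subtype.ext
    rw [h1, h2]
  have h1 : nClasses CUEquiv 1 = 0 := by
    rw [CU.nClasses_eq]
    haveI := CU.mok_one_empty
    exact Nat.card_of_isEmpty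
  have h2 : nClasses CUEquiv 2 = 1 := by
    rw [CU.nclasses_ge2 (by omega)]
    exact CU.Kc_small (by omega)
  have h3 : nClasses CUEquiv 3 = 1 := by
    rw [CU.nclasses_ge2 (by omega)]
    exact CU.Kc_small (by omega)
  have h4 : nClasses CUEquiv 4 = 1 := by
    rw [CU.nclasses_ge2 (by omega)]
    exact CU.Kc_small (by omega)
  refine ⟨h0, h1, h2, h3, h4, ?_⟩
  intro n hn
  obtain ⟨m, rfl⟩ : ∃ m, n = m + 5 := ⟨n - 5, by omega⟩
  rw [CU.nclasses_ge2 (n := m + 5) (by omega)]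
  rw [(by omega : m + 5 - 2 = m + 3), (by omega : m + 5 - 1 = m + 4)]
  rw [CU.nclasses_ge2 (n := m + 4) (by omega), CU.nclasses_ge2 (n := m + 3) (by omega)]
  rw [(by omega : m + 4 - 2 = m + 2), (by omega : m + 3 - 2 = m + 1)]
  exact CU.Kc_rec m
end
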